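/- arXiv:2112.10875 — 5 statements merged into one kernel-verified Lean document; each statement's English description precedes it below -/
import Mathlib

section
/- Let G=(V,E) be a polytree. The third-order moment polytope P_G^{(3)} ⊆ ℝ^{|V|+|E|} (with coordinates (z,y)) is exactly the set of solutions of: z_l ≥ 0 for all l∈V; y_{lm} ≥ 0 for all (l,m)∈E; Σ_{l∈V} z_l = 1; 2z_l + Σ_{h∈pa(l)} y_{hl} − y_{lm} ≥ 0 for every edge (l,m)∈E; and 3z_l + Σ_{h∈pa(l)} y_{hl} − Σ_{m∈ch(l)} y_{lm} ≥ 0 for every l∈V, where pa(l) and ch(l) denote the parents and children of l. -/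
open MvPolynomial Matrix Finset

namespace LNG

variable {n : ℕ}

/-- A directed path in the directed graph `E`, recorded as the (nonempty) list of
visited vertices. -/
def IsDiPath (E : Fin n → Fin n → Prop) : List (Fin n) → Prop
  | [] => False
  | [_] => True
  | a :: b :: l => E a b ∧ IsDiPath E (b :: l)

/-- `p` is a directed path from `v` to `i` (possibly of length zero). -/
def IsPathFromTo (E : Fin n → Fin n → Prop) (v : Fin n) (p : List (Fin n)) (i : Fin n) : Prop :=
  IsDiPath E p ∧ p.head? = some v ∧ p.getLast? = some i

/-- A `k`-trek with top `v` between the vertices `i 0, …, i (k-1)`: an ordered collection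
of directed paths with common source `v`, where the `r`-th path has sink `i r`. -/
def IsTrek (E : Fin n → Fin n → Prop) {k : ℕ} (v : Fin n)
    (P : Fin k → List (Fin n)) (i : Fin k → Fin n) : Prop :=
  ∀ r, IsPathFromTo E v (P r) (i r)

/-- A simple `k`-trek: the top is the only vertex lying on all `k` paths. -/
def IsSimpleTrek (E : Fin n → Fin n → Prop) {k : ℕ} (v : Fin n)
    (P : Fin k → List (Fin n)) (i : Fin k → Fin n) : Prop :=
  IsTrek E v P i ∧ ∀ w : Fin n, (∀ r, w ∈ P r) → w = v

/-- A 2-trek with top `v` between `i` and `j`. -/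
def IsTrek2 (E : Fin n → Fin n → Prop) (v : Fin n) (p q : List (Fin n)) (i j : Fin n) : Prop :=
  IsPathFromTo E v p i ∧ IsPathFromTo E v q j

def IsSimpleTrek2 (E : Fin n → Fin n → Prop) (v : Fin n) (p q : List (Fin n))
    (i j : Fin n) : Prop :=
  IsTrek2 E v p q i j ∧ ∀ w : Fin n, w ∈ p → w ∈ q → w = v

/-- A 3-trek with top `v` between `i`, `j` and `k`. -/
def IsTrek3 (E : Fin n → Fin n → Prop) (v : Fin n) (p q r : List (Fin n))
    (i j k : Fin n) : Prop :=
  IsPathFromTo E v p i ∧ IsPathFromTo E v q j ∧ IsPathFromTo E v r k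

def IsSimpleTrek3 (E : Fin n → Fin n → Prop) (v : Fin n) (p q r : List (Fin n))
    (i j k : Fin n) : Prop :=
  IsTrek3 E v p q r i j k ∧ ∀ w : Fin n, w ∈ p → w ∈ q → w ∈ r → w = v

def Trek2Exists (E : Fin n → Fin n → Prop) (i j : Fin n) : Prop :=
  ∃ v p q, IsTrek2 E v p q i j

def Trek3Exists (E : Fin n → Fin n → Prop) (i j k : Fin n) : Prop :=
  ∃ v p q r, IsTrek3 E v p q r i j k

/-- The underlying undirected (simple) graph of the directed graph `E`. -/
def underlying (E : Fin n → Fin n → Prop) : SimpleGraph (Fin n) where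
  Adj a b := a ≠ b ∧ (E a b ∨ E b a)
  symm := ⟨fun a b h => ⟨h.1.symm, h.2.symm⟩⟩
  loopless := ⟨fun a h => h.1 rfl⟩

/-- A polytree: a topologically ordered DAG whose underlying undirected graph is a tree. -/
def IsPolytree (E : Fin n → Fin n → Prop) : Prop :=
  (∀ i j : Fin n, E i j → i < j) ∧ (underlying E).IsTree

/-! ### Variables of the moment polynomial ring -/

abbrev SIdx (n : ℕ) := {p : Fin n × Fin n // p.1 ≤ p.2}
abbrev TIdx (n : ℕ) := {p : Fin n × Fin n × Fin n // p.1 ≤ p.2.1 ∧ p.2.1 ≤ p.2.2}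

/-- Variables `s_{ij}` (`1 ≤ i ≤ j ≤ n`) and `t_{ijk}` (`1 ≤ i ≤ j ≤ k ≤ n`). -/
abbrev MomVar (n : ℕ) := SIdx n ⊕ TIdx n

/-- Parameter variables `a_i`, `b_i` (`i ∈ V`) and `λ_{ij}`. -/
abbrev PVar (n : ℕ) := (Fin n ⊕ Fin n) ⊕ Fin n × Fin n

/-- Median of three. -/
def mid3 (i j k : Fin n) : Fin n := max (min i j) (min (max i j) k)

lemma min3_le_mid3 (i j k : Fin n) : min i (min j k) ≤ mid3 i j k :=
  le_trans (le_min (min_le_left _ _) (le_trans (min_le_right i (min j k)) (min_le_left j k)))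
    (le_max_left _ _)

lemma mid3_le_max3 (i j k : Fin n) : mid3 i j k ≤ max i (max j k) :=
  max_le (le_trans (min_le_left i j) (le_max_left _ _))
    (le_trans (min_le_right (max i j) k) (le_trans (le_max_right j k) (le_max_right i _)))

/-- The variable `s_{ij}` (indices sorted). -/
noncomputable def svar (i j : Fin n) : MvPolynomial (MomVar n) ℝ :=
  X (Sum.inl ⟨(min i j, max i j), min_le_max⟩)

/-- The variable `t_{ijk}` (indices sorted). -/
noncomputable def tvar (i j k : Fin n) : MvPolynomial (MomVar n) ℝ :=
  X (Sum.inr ⟨(min i (min j k), mid3 i j k, max i (max j k)),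
      min3_le_mid3 i j k, mid3_le_max3 i j k⟩)

/-- Evaluation of the moment variables at a concrete pair `(S, T)`. -/
def evalVar (S : Matrix (Fin n) (Fin n) ℝ) (T : Fin n → Fin n → Fin n → ℝ) :
    MomVar n → ℝ
  | Sum.inl p => S p.1.1 p.1.2
  | Sum.inr p => T p.1.1 p.1.2.1 p.1.2.2

/-! ### The third-order moment model -/

/-- `Λ ∈ ℝ^E`. -/
def Supported (E : Fin n → Fin n → Prop) (Λ : Matrix (Fin n) (Fin n) ℝ) : Prop :=
  ∀ i j, ¬ E i j → Λ i j = 0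

/-- Covariance matrix `(I-Λ)^{-T} Ω⁽²⁾ (I-Λ)^{-1}`. -/
noncomputable def momentS (Λ : Matrix (Fin n) (Fin n) ℝ) (ω2 : Fin n → ℝ) :
    Matrix (Fin n) (Fin n) ℝ :=
  ((1 - Λ)⁻¹)ᵀ * Matrix.diagonal ω2 * (1 - Λ)⁻¹

/-- Third moment tensor `Ω⁽³⁾ ∙ (I-Λ)^{-1} ∙ (I-Λ)^{-1} ∙ (I-Λ)^{-1}`. -/
noncomputable def momentT (Λ : Matrix (Fin n) (Fin n) ℝ) (ω3 : Fin n → ℝ)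
    (i j k : Fin n) : ℝ :=
  ∑ a, ω3 a * (1 - Λ)⁻¹ a i * (1 - Λ)⁻¹ a j * (1 - Λ)⁻¹ a k

/-- Membership in the third-order moment model `M^{≤3}(G)`. -/
def MomentModel (E : Fin n → Fin n → Prop)
    (S : Matrix (Fin n) (Fin n) ℝ) (T : Fin n → Fin n → Fin n → ℝ) : Prop :=
  ∃ (Λ : Matrix (Fin n) (Fin n) ℝ) (ω2 ω3 : Fin n → ℝ),
    Supported E Λ ∧ (∀ i, 0 < ω2 i) ∧ S = momentS Λ ω2 ∧ T = momentT Λ ω3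

/-- The third-order moment (vanishing) ideal `I^{≤3}(G)`. -/
noncomputable def momentIdeal (E : Fin n → Fin n → Prop) : Ideal (MvPolynomial (MomVar n) ℝ) where
  carrier := {f | ∀ S T, MomentModel E S T → eval (evalVar S T) f = 0}
  add_mem' := by
    intro f g hf hg S T h
    simp [map_add, hf S T h, hg S T h]
  zero_mem' := by
    intro S T h
    simp
  smul_mem' := by
    intro c f hf S T h
    simp [smul_eq_mul, _root_.map_mul, hf S T h]

/-- A fully symmetric 3-tensor. -/
def SymTensor3 (T : Fin n → Fin n → Fin n → ℝ) : Prop :=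
  ∀ i j k : Fin n, T i j k = T j i k ∧ T i j k = T i k j

/-! ### Trek matrices and their minors -/

/-- `top(i,k) = top(j,k)`: there is a common vertex `v` that is the top of the
simple 2-treks between `i,k` and between `j,k`. -/
def SameTop2 (E : Fin n → Fin n → Prop) (i j k : Fin n) : Prop :=
  ∃ v, (∃ p q, IsSimpleTrek2 E v p q i k) ∧ (∃ p q, IsSimpleTrek2 E v p q j k)

/-- `top(i,l,m) = top(j,l,m)`. -/
def SameTop3 (E : Fin n → Fin n → Prop) (i j l m : Fin n) : Prop :=
  ∃ v, (∃ p q r, IsSimpleTrek3 E v p q r i l m) ∧ (∃ p q r, IsSimpleTrek3 E v p q r j l m)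

/-- `f` is a `2 × 2` minor of the trek-matrix `A_{i,j}`. -/
def IsTrekMinorOf (E : Fin n → Fin n → Prop) (i j : Fin n)
    (f : MvPolynomial (MomVar n) ℝ) : Prop :=
  (∃ k k', SameTop2 E i j k ∧ SameTop2 E i j k' ∧
      f = svar i k * svar j k' - svar j k * svar i k') ∨
  (∃ k l m, SameTop2 E i j k ∧ SameTop3 E i j l m ∧
      f = svar i k * tvar j l m - svar j k * tvar i l m) ∨
  (∃ l m l' m', SameTop3 E i j l m ∧ SameTop3 E i j l' m' ∧
      f = tvar i l m * tvar j l' m' - tvar j l m * tvar i l' m')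

/-- Variables `s_{ij}` with no 2-trek between `i,j` and `t_{ijk}` with no 3-trek. -/
def noTrekVars (E : Fin n → Fin n → Prop) : Set (MvPolynomial (MomVar n) ℝ) :=
  {f | (∃ i j, ¬ Trek2Exists E i j ∧ f = svar i j) ∨
       (∃ i j k, ¬ Trek3Exists E i j k ∧ f = tvar i j k)}

/-- The 2-minors of the trek-matrices `A_{i,j}` over edges `i → j` of `G`. -/
def edgeMinors (E : Fin n → Fin n → Prop) : Set (MvPolynomial (MomVar n) ℝ) :=
  {f | ∃ i j, E i j ∧ IsTrekMinorOf E i j f}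

/-- The 2-minors of all trek-matrices `A_{i,j}`. -/
def allMinors (E : Fin n → Fin n → Prop) : Set (MvPolynomial (MomVar n) ℝ) :=
  {f | ∃ i j, Trek2Exists E i j ∧ IsTrekMinorOf E i j f}

/-! ### The simple trek rule parametrization -/

/-- Product of the edge weights `w` along a path. -/
def pathProd {R : Type*} [CommSemiring R] (w : Fin n → Fin n → R) : List (Fin n) → R
  | [] => 1
  | [_] => 1
  | a :: b :: l => w a b * pathProd w (b :: l)

/-- Sum of a weight over all simple 2-treks between `i` and `j`. -/
noncomputable def trekSum2 {M : Type*} [AddCommMonoid M] (E : Fin n → Fin n → Prop)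
    (wt : Fin n → List (Fin n) → List (Fin n) → M) (i j : Fin n) : M :=
  ∑ᶠ τ : {x : Fin n × List (Fin n) × List (Fin n) //
      IsSimpleTrek2 E x.1 x.2.1 x.2.2 i j}, wt τ.1.1 τ.1.2.1 τ.1.2.2

/-- Sum of a weight over all simple 3-treks between `i`, `j` and `k`. -/
noncomputable def trekSum3 {M : Type*} [AddCommMonoid M] (E : Fin n → Fin n → Prop)
    (wt : Fin n → List (Fin n) → List (Fin n) → List (Fin n) → M) (i j k : Fin n) : M :=
  ∑ᶠ τ : {x : Fin n × List (Fin n) × List (Fin n) × List (Fin n) //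
      IsSimpleTrek3 E x.1 x.2.1 x.2.2.1 x.2.2.2 i j k},
    wt τ.1.1 τ.1.2.1 τ.1.2.2.1 τ.1.2.2.2

/-- The `(i,j)` coordinate of the simple trek rule parametrization `φ_G^*` (covariances). -/
noncomputable def phiS (E : Fin n → Fin n → Prop) (a : Fin n → ℝ)
    (Λ : Matrix (Fin n) (Fin n) ℝ) (i j : Fin n) : ℝ :=
  trekSum2 E (fun v p q => a v * (pathProd (fun x y => Λ x y) p * pathProd (fun x y => Λ x y) q)) i j

/-- The `(i,j,k)` coordinate of the simple trek rule parametrization `φ_G^*` (third moments). -/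
noncomputable def phiT (E : Fin n → Fin n → Prop) (b : Fin n → ℝ)
    (Λ : Matrix (Fin n) (Fin n) ℝ) (i j k : Fin n) : ℝ :=
  trekSum3 E (fun v p q r => b v * (pathProd (fun x y => Λ x y) p *
    pathProd (fun x y => Λ x y) q * pathProd (fun x y => Λ x y) r)) i j k

/-- The ring homomorphism `φ_G` of the simple trek rule. -/
noncomputable def phiG (E : Fin n → Fin n → Prop) :
    MvPolynomial (MomVar n) ℝ →ₐ[ℝ] MvPolynomial (PVar n) ℝ :=
  aeval fun v => match v with
    | Sum.inl p => trekSum2 E (fun v' pl ql =>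
        X (Sum.inl (Sum.inl v')) * (pathProd (fun x y => X (Sum.inr (x, y))) pl *
          pathProd (fun x y => X (Sum.inr (x, y))) ql)) p.1.1 p.1.2
    | Sum.inr p => trekSum3 E (fun v' pl ql rl =>
        X (Sum.inl (Sum.inr v')) * (pathProd (fun x y => X (Sum.inr (x, y))) pl *
          pathProd (fun x y => X (Sum.inr (x, y))) ql *
          pathProd (fun x y => X (Sum.inr (x, y))) rl)) p.1.1 p.1.2.1 p.1.2.2


/-- Number of times the edge `(l,m)` is used along a path (counted with multiplicity). -/
def edgeCount (l m : Fin n) : List (Fin n) → ℕ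
  | [] => 0
  | [_] => 0
  | a :: b :: rest => (if a = l ∧ b = m then 1 else 0) + edgeCount l m (b :: rest)

/-- The exponent vector `e_{ijk} = (z, y)` of a (simple) 3-trek with top `v` and
paths `p, q, r`: `z` is the indicator of the top, `y_{lm}` counts the uses of the
edge `(l,m)` among the three paths. -/
noncomputable def trekPoint (v : Fin n) (p q r : List (Fin n)) :
    (Fin n → ℝ) × (Fin n → Fin n → ℝ) :=
  (fun l => if l = v then 1 else 0,
   fun l m => ((edgeCount l m p + edgeCount l m q + edgeCount l m r : ℕ) : ℝ))

/-- The third-order moment polytope `P_G^{(3)}`. -/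
noncomputable def momentPolytope (E : Fin n → Fin n → Prop) :
    Set ((Fin n → ℝ) × (Fin n → Fin n → ℝ)) :=
  convexHull ℝ
    {x | ∃ i j k v p q r, IsSimpleTrek3 E v p q r i j k ∧ x = trekPoint v p q r}

/-- The polyhedron `Q_G` cut out by the inequalities of Theorem 6.3 (together with the
vanishing of the coordinates corresponding to non-edges). -/
def QPoly (E : Fin n → Fin n → Prop) [DecidableRel E] :
    Set ((Fin n → ℝ) × (Fin n → Fin n → ℝ)) :=
  {x | (∀ l, 0 ≤ x.1 l) ∧
       (∀ l m, E l m → 0 ≤ x.2 l m) ∧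
       (∀ l m, ¬ E l m → x.2 l m = 0) ∧
       (∑ l, x.1 l) = 1 ∧
       (∀ l m, E l m →
         0 ≤ 2 * x.1 l + (∑ h ∈ Finset.univ.filter (fun h => E h l), x.2 h l) - x.2 l m) ∧
       (∀ l, 0 ≤ 3 * x.1 l + (∑ h ∈ Finset.univ.filter (fun h => E h l), x.2 h l)
          - ∑ m ∈ Finset.univ.filter (fun m => E l m), x.2 l m)}


/-! ### Auxiliary development for the proof -/

section Aux

variable {n : ℕ} {E : Fin n → Fin n → Prop}

/-- Total out-multiplicity of vertex `l` along a path. -/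
def outN (p : List (Fin n)) (l : Fin n) : ℕ := ∑ m, edgeCount l m p

/-- Total in-multiplicity of vertex `l` along a path. -/
def inN (p : List (Fin n)) (l : Fin n) : ℕ := ∑ h, edgeCount h l p

lemma diPath_cons {a b : Fin n} {t : List (Fin n)} (h : IsDiPath E (a :: b :: t)) :
    E a b ∧ IsDiPath E (b :: t) := h

lemma edgeCount_cons (l m a b : Fin n) (t : List (Fin n)) :
    edgeCount l m (a :: b :: t) = (if a = l ∧ b = m then 1 else 0) + edgeCount l m (b :: t) := rfl

lemma edgeCount_ne_zero : ∀ p : List (Fin n), IsDiPath E p → ∀ l m : Fin n,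
    edgeCount l m p ≠ 0 → E l m ∧ m ∈ p.tail
  | [], h => (by simpa [IsDiPath] using h)
  | [a], _ => by intro l m hm; simp [edgeCount] at hm
  | a :: b :: t, h => by
    intro l m hm
    obtain ⟨hab, ht⟩ := diPath_cons h
    rw [edgeCount_cons] at hm
    by_cases hc : a = l ∧ b = m
    · exact ⟨hc.1 ▸ hc.2 ▸ hab, by simp [← hc.2]⟩
    · have := edgeCount_ne_zero (b :: t) ht l m (by simpa [hc] using hm)
      exact ⟨this.1, List.mem_cons_of_mem _ this.2⟩

lemma chain'_of_diPath (hlt : ∀ i j, E i j → i < j) :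
    ∀ p : List (Fin n), IsDiPath E p → List.Chain' (· < ·) p
  | [], _ => List.isChain_nil
  | [a], _ => List.isChain_singleton a
  | a :: b :: t, h => by
    obtain ⟨hab, ht⟩ := diPath_cons h
    exact List.IsChain.cons_cons (hlt _ _ hab) (chain'_of_diPath hlt (b :: t) ht)

lemma nodup_of_diPath (hlt : ∀ i j, E i j → i < j) (p : List (Fin n))
    (h : IsDiPath E p) : p.Nodup :=
  ((List.isChain_iff_pairwise.1 (chain'_of_diPath hlt p h)).imp ne_of_lt)

lemma edgeCount_eq_zero_of_not_mem : ∀ (p : List (Fin n)) (l m : Fin n), l ∉ p →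
    edgeCount l m p = 0
  | [], _, _, _ => rfl
  | [_], _, _, _ => rfl
  | a :: b :: t, l, m, h => by
    rw [edgeCount_cons]
    have h1 : a ≠ l := fun hh => h (hh ▸ List.mem_cons_self)
    have h2 : l ∉ b :: t := fun hh => h (List.mem_cons_of_mem _ hh)
    simp [h1, edgeCount_eq_zero_of_not_mem (b :: t) l m h2]

lemma edgeCount_le_one : ∀ p : List (Fin n), p.Nodup → ∀ l m : Fin n, edgeCount l m p ≤ 1
  | [], _, _, _ => by simp [edgeCount]
  | [_], _, _, _ => by simp [edgeCount]
  | a :: b :: t, h, l, m => by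
    rw [edgeCount_cons]
    by_cases hc : a = l ∧ b = m
    · have hl : l ∉ b :: t := by rw [← hc.1]; exact (List.nodup_cons.1 h).1
      rw [edgeCount_eq_zero_of_not_mem _ _ _ hl]
      simp [hc]
    · simpa [hc] using edgeCount_le_one (b :: t) (List.nodup_cons.1 h).2 l m

lemma outN_cons (a b : Fin n) (t : List (Fin n)) (l : Fin n) :
    outN (a :: b :: t) l = (if a = l then 1 else 0) + outN (b :: t) l := by
  unfold outN
  by_cases ha : a = l
  · simp [edgeCount_cons, ha, Finset.sum_add_distrib]
  · simp [edgeCount_cons, ha]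

lemma inN_cons (a b : Fin n) (t : List (Fin n)) (l : Fin n) :
    inN (a :: b :: t) l = (if b = l then 1 else 0) + inN (b :: t) l := by
  unfold inN
  by_cases hb : b = l
  · simp [edgeCount_cons, hb, Finset.sum_add_distrib]
  · simp [edgeCount_cons, hb]

lemma outN_le_inN : ∀ (p : List (Fin n)) (a : Fin n), p.head? = some a → ∀ l : Fin n,
    outN p l ≤ inN p l + (if l = a then 1 else 0)
  | [], _, h => by simp at h
  | [c], a, h => by
    intro l; simp at h
    simp [outN, inN, edgeCount]
  | a' :: b :: t, a, h => by
    intro l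
    have ha : a' = a := by simpa using h
    subst ha
    have IH := outN_le_inN (b :: t) b rfl l
    rw [outN_cons, inN_cons]
    split_ifs at IH ⊢ <;> omega

lemma edgeCount_le_inN : ∀ (p : List (Fin n)) (l m : Fin n),
    edgeCount l m p ≤ inN p l + (if p.head? = some l then 1 else 0)
  | [], _, _ => by simp [edgeCount, inN]
  | [c], l, m => by simp [edgeCount, inN]
  | a :: b :: t, l, m => by
    have IH := edgeCount_le_inN (b :: t) l m
    rw [edgeCount_cons, inN_cons]
    simp only [List.head?_cons, Option.some.injEq] at IH ⊢
    have e1 : (if a = l ∧ b = m then (1:ℕ) else 0) ≤ if a = l then 1 else 0 := by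
      split_ifs with h1 h2
      · omega
      · exact absurd h1.1 h2
      · omega
      · omega
    linarith

lemma mem_tail_gt (hlt : ∀ i j, E i j → i < j) {p : List (Fin n)} (hp : IsDiPath E p)
    {v : Fin n} (hv : p.head? = some v) {w : Fin n} (hw : w ∈ p.tail) : v < w := by
  rcases p with _ | ⟨a, t⟩
  · simp at hv
  · have ha : a = v := by simpa using hv
    subst ha
    have := List.isChain_iff_pairwise.1 (chain'_of_diPath hlt _ hp)
    exact (List.pairwise_cons.1 this).1 w (by simpa using hw)

lemma inN_head_eq_zero (hlt : ∀ i j, E i j → i < j) {p : List (Fin n)} (hp : IsDiPath E p)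
    {v : Fin n} (hv : p.head? = some v) : inN p v = 0 := by
  unfold inN
  refine Finset.sum_eq_zero fun h _ => ?_
  by_contra hne
  exact absurd (mem_tail_gt hlt hp hv (edgeCount_ne_zero p hp h v hne).2) (lt_irrefl v)

end Aux

section Dir1

variable {n : ℕ} {E : Fin n → Fin n → Prop} [DecidableRel E]

lemma ec_zero_of_not_edge {p : List (Fin n)} (hp : IsDiPath E p) {l m : Fin n}
    (hE : ¬ E l m) : edgeCount l m p = 0 := by
  by_contra h
  exact hE (edgeCount_ne_zero p hp l m h).1

lemma filter_in_eq {p : List (Fin n)} (hp : IsDiPath E p) (l : Fin n) :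
    ∑ h ∈ Finset.univ.filter (fun h => E h l), edgeCount h l p = inN p l := by
  refine Finset.sum_subset (Finset.subset_univ _) fun h _ hh => ?_
  exact ec_zero_of_not_edge hp (by simpa using hh)

lemma filter_out_eq {p : List (Fin n)} (hp : IsDiPath E p) (l : Fin n) :
    ∑ m ∈ Finset.univ.filter (fun m => E l m), edgeCount l m p = outN p l := by
  refine Finset.sum_subset (Finset.subset_univ _) fun m _ hm => ?_
  exact ec_zero_of_not_edge hp (by simpa using hm)

lemma trekPoint_mem_QPoly (hlt : ∀ i j, E i j → i < j)
    {v : Fin n} {p q r : List (Fin n)} {i j k : Fin n}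
    (h : IsSimpleTrek3 E v p q r i j k) : trekPoint v p q r ∈ QPoly E := by
  obtain ⟨⟨⟨hp, hpv, hpi⟩, ⟨hq, hqv, hqj⟩, ⟨hr, hrv, hrk⟩⟩, hs⟩ := h
  have hinsum : ∀ l : Fin n, ∑ h ∈ Finset.univ.filter (fun h => E h l),
      (trekPoint v p q r).2 h l = ((inN p l + inN q l + inN r l : ℕ) : ℝ) := by
    intro l
    simp only [trekPoint]
    rw [← Nat.cast_sum]
    congr 1
    rw [Finset.sum_add_distrib, Finset.sum_add_distrib,
      filter_in_eq hp, filter_in_eq hq, filter_in_eq hr]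
  have houtsum : ∀ l : Fin n, ∑ m ∈ Finset.univ.filter (fun m => E l m),
      (trekPoint v p q r).2 l m = ((outN p l + outN q l + outN r l : ℕ) : ℝ) := by
    intro l
    simp only [trekPoint]
    rw [← Nat.cast_sum]
    congr 1
    rw [Finset.sum_add_distrib, Finset.sum_add_distrib,
      filter_out_eq hp, filter_out_eq hq, filter_out_eq hr]
  refine ⟨fun l => ?_, fun l m _ => ?_, fun l m hlm => ?_, ?_, fun l m hlm => ?_, fun l => ?_⟩
  · simp only [trekPoint]; positivity
  · simp only [trekPoint]; positivity
  · simp only [trekPoint]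
    rw [ec_zero_of_not_edge hp hlm, ec_zero_of_not_edge hq hlm, ec_zero_of_not_edge hr hlm]
    simp
  · simp [trekPoint]
  · -- edge inequality
    rw [hinsum l]
    simp only [trekPoint]
    by_cases hl : l = v
    · subst hl
      have hb : edgeCount l m p + edgeCount l m q + edgeCount l m r ≤ 2 := by
        by_contra hc
        push_neg at hc
        have b1 := edgeCount_le_one p (nodup_of_diPath hlt p hp) l m
        have b2 := edgeCount_le_one q (nodup_of_diPath hlt q hq) l m
        have b3 := edgeCount_le_one r (nodup_of_diPath hlt r hr) l m
        have e1 : edgeCount l m p ≠ 0 := by omega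
        have e2 : edgeCount l m q ≠ 0 := by omega
        have e3 : edgeCount l m r ≠ 0 := by omega
        have hm1 := List.mem_of_mem_tail (edgeCount_ne_zero p hp l m e1).2
        have hm2 := List.mem_of_mem_tail (edgeCount_ne_zero q hq l m e2).2
        have hm3 := List.mem_of_mem_tail (edgeCount_ne_zero r hr l m e3).2
        have := hs m hm1 hm2 hm3
        exact absurd (this ▸ hlt l m hlm) (lt_irrefl l)
      have hb' : ((edgeCount l m p + edgeCount l m q + edgeCount l m r : ℕ) : ℝ) ≤ 2 := by
        exact_mod_cast hb
      have hin : (0:ℝ) ≤ ((inN p l + inN q l + inN r l : ℕ) : ℝ) := by positivity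
      norm_num
      push_cast at hb' hin
      linarith
    · have hbp : edgeCount l m p ≤ inN p l := by
        have := edgeCount_le_inN p l m
        rw [hpv, if_neg (by simpa using (Ne.symm hl))] at this
        simpa using this
      have hbq : edgeCount l m q ≤ inN q l := by
        have := edgeCount_le_inN q l m
        rw [hqv, if_neg (by simpa using (Ne.symm hl))] at this
        simpa using this
      have hbr : edgeCount l m r ≤ inN r l := by
        have := edgeCount_le_inN r l m
        rw [hrv, if_neg (by simpa using (Ne.symm hl))] at this
        simpa using this
      have : ((edgeCount l m p + edgeCount l m q + edgeCount l m r : ℕ) : ℝ)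
          ≤ ((inN p l + inN q l + inN r l : ℕ) : ℝ) := by
        exact_mod_cast Nat.add_le_add (Nat.add_le_add hbp hbq) hbr
      simp only [if_neg hl]
      linarith
  · -- vertex inequality
    rw [hinsum l, houtsum l]
    simp only [trekPoint]
    have bp := outN_le_inN p v hpv l
    have bq := outN_le_inN q v hqv l
    have br := outN_le_inN r v hrv l
    by_cases hl : l = v
    · rw [if_pos hl] at bp bq br
      have hN : outN p l + outN q l + outN r l ≤ inN p l + inN q l + inN r l + 3 := by omega
      have hR : ((outN p l + outN q l + outN r l : ℕ) : ℝ)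
          ≤ ((inN p l + inN q l + inN r l : ℕ) : ℝ) + 3 := by exact_mod_cast hN
      rw [if_pos hl]
      linarith
    · rw [if_neg hl] at bp bq br
      have hN : outN p l + outN q l + outN r l ≤ inN p l + inN q l + inN r l := by omega
      have hR : ((outN p l + outN q l + outN r l : ℕ) : ℝ)
          ≤ ((inN p l + inN q l + inN r l : ℕ) : ℝ) := by exact_mod_cast hN
      rw [if_neg hl]
      linarith

lemma QPoly_convex : Convex ℝ (QPoly E) := by
  intro x hx y hy a b ha hb hab
  obtain ⟨h1, h2, h3, h4, h5, h6⟩ := hx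
  obtain ⟨g1, g2, g3, g4, g5, g6⟩ := hy
  simp only [QPoly, Set.mem_setOf_eq, Prod.fst_add, Prod.smul_fst, Prod.snd_add, Prod.smul_snd,
    Pi.add_apply, Pi.smul_apply, smul_eq_mul]
  refine ⟨fun l => ?_, fun l m hlm => ?_, fun l m hlm => ?_, ?_, fun l m hlm => ?_, fun l => ?_⟩
  · exact add_nonneg (mul_nonneg ha (h1 l)) (mul_nonneg hb (g1 l))
  · exact add_nonneg (mul_nonneg ha (h2 l m hlm)) (mul_nonneg hb (g2 l m hlm))
  · rw [h3 l m hlm, g3 l m hlm]; ring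
  · rw [Finset.sum_add_distrib, ← Finset.mul_sum, ← Finset.mul_sum, h4, g4]
    linarith
  · rw [Finset.sum_add_distrib, ← Finset.mul_sum, ← Finset.mul_sum]
    have u1 := mul_nonneg ha (h5 l m hlm)
    have u2 := mul_nonneg hb (g5 l m hlm)
    nlinarith [u1, u2]
  · rw [Finset.sum_add_distrib, ← Finset.mul_sum, ← Finset.mul_sum,
      Finset.sum_add_distrib, ← Finset.mul_sum, ← Finset.mul_sum]
    have u1 := mul_nonneg ha (h6 l)
    have u2 := mul_nonneg hb (g6 l)
    nlinarith [u1, u2]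

lemma momentPolytope_subset_QPoly (hG : IsPolytree E) : momentPolytope E ⊆ QPoly E := by
  refine convexHull_min ?_ QPoly_convex
  rintro x ⟨i, j, k, v, p, q, r, hst, rfl⟩
  exact trekPoint_mem_QPoly hG.1 hst

end Dir1

section Dir2

variable {n : ℕ} (E : Fin n → Fin n → Prop) [DecidableRel E]

/-- Weighted in-degree. -/
def INx (x : (Fin n → ℝ) × (Fin n → Fin n → ℝ)) (l : Fin n) : ℝ := ∑ h ∈ Finset.univ.filter (fun h => E h l), x.2 h l

/-- Weighted out-degree. -/
def OUTx (x : (Fin n → ℝ) × (Fin n → Fin n → ℝ)) (l : Fin n) : ℝ := ∑ m ∈ Finset.univ.filter (fun m => E l m), x.2 l m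

/-- Vertex-inequality row value. -/
def vRow (x : (Fin n → ℝ) × (Fin n → Fin n → ℝ)) (l : Fin n) : ℝ := 3 * x.1 l + INx E x l - OUTx E x l

/-- Edge-inequality row value. -/
def eRow (x : (Fin n → ℝ) × (Fin n → Fin n → ℝ)) (l m : Fin n) : ℝ := 2 * x.1 l + INx E x l - x.2 l m

variable (hlt : ∀ i j, E i j → i < j) (x : (Fin n → ℝ) × (Fin n → Fin n → ℝ))

open Classical in
/-- The forced / greedy step of the path construction. -/
noncomputable def gstep (l : Fin n) : Option {m : Fin n // l < m} :=
  if h : ∃ m, E l m ∧ 0 < x.2 l m ∧ eRow E x l m = 0 then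
    some ⟨h.choose, hlt l h.choose h.choose_spec.1⟩
  else if h2 : vRow E x l = 0 ∧ ∃ m, E l m ∧ 0 < x.2 l m then
    some ⟨h2.2.choose, hlt l h2.2.choose h2.2.choose_spec.1⟩
  else none

lemma gstep_spec {l : Fin n} {m : {m : Fin n // l < m}} (h : gstep E hlt x l = some m) :
    E l m.1 ∧ 0 < x.2 l m.1 := by
  unfold gstep at h
  split_ifs at h with h1 h2
  · obtain ⟨hE, hy, _⟩ := h1.choose_spec
    cases h
    exact ⟨hE, hy⟩
  · obtain ⟨hE, hy⟩ := h2.2.choose_spec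
    cases h
    exact ⟨hE, hy⟩

lemma gstep_of_P1 {l : Fin n} (h1 : ∃ m, E l m ∧ 0 < x.2 l m ∧ eRow E x l m = 0) :
    ∃ m, gstep E hlt x l = some m ∧ E l m.1 ∧ 0 < x.2 l m.1 ∧ eRow E x l m.1 = 0 := by
  have hh : gstep E hlt x l = some ⟨h1.choose, hlt l h1.choose h1.choose_spec.1⟩ := dif_pos h1
  exact ⟨_, hh, h1.choose_spec⟩

lemma gstep_of_P2 {l : Fin n} (h2 : vRow E x l = 0 ∧ ∃ m, E l m ∧ 0 < x.2 l m) :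
    ∃ m, gstep E hlt x l = some m := by
  by_cases h1 : ∃ m, E l m ∧ 0 < x.2 l m ∧ eRow E x l m = 0
  · obtain ⟨m, hm, _⟩ := gstep_of_P1 E hlt x h1
    exact ⟨m, hm⟩
  · have e1 : gstep E hlt x l = if h2' : vRow E x l = 0 ∧ ∃ m, E l m ∧ 0 < x.2 l m then
        some ⟨h2'.2.choose, hlt l h2'.2.choose h2'.2.choose_spec.1⟩ else none := dif_neg h1
    rw [e1, dif_pos h2]
    exact ⟨_, rfl⟩

/-- The greedy/forced path starting at `l`. -/
noncomputable def bp (l : Fin n) : List (Fin n) :=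
  match gstep E hlt x l with
  | none => [l]
  | some m => l :: bp m.1
termination_by n - l.val
decreasing_by
  have h1 := m.2
  have h2 := m.1.isLt
  rw [Fin.lt_def] at h1
  omega

lemma bp_eq (l : Fin n) : bp E hlt x l =
    match gstep E hlt x l with
    | none => [l]
    | some m => l :: bp E hlt x m.1 := by
  rw [bp]

lemma bp_none {l : Fin n} (h : gstep E hlt x l = none) : bp E hlt x l = [l] := by
  rw [bp_eq, h]

lemma bp_some {l : Fin n} {m} (h : gstep E hlt x l = some m) :
    bp E hlt x l = l :: bp E hlt x m.1 := by
  rw [bp_eq, h]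

/-- Induction principle along the greedy path. -/
lemma bp_ind (P : Fin n → Prop)
    (h1 : ∀ l, gstep E hlt x l = none → P l)
    (h2 : ∀ l m, gstep E hlt x l = some m → P m.1 → P l) : ∀ l, P l := fun l => by
  rcases h : gstep E hlt x l with _ | m
  · exact h1 l h
  · exact h2 l m h (bp_ind P h1 h2 m.1)
termination_by l => n - l.val
decreasing_by
  have ha := m.2
  have hb := m.1.isLt
  rw [Fin.lt_def] at ha
  omega

lemma bp_head (l : Fin n) : (bp E hlt x l).head? = some l := by
  rcases h : gstep E hlt x l with _ | m
  · rw [bp_none E hlt x h]; rfl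
  · rw [bp_some E hlt x h]; rfl

lemma bp_mem_ge : ∀ l, ∀ w ∈ bp E hlt x l, l ≤ w := by
  refine bp_ind E hlt x _ (fun l h w hw => ?_) (fun l m h IH w hw => ?_)
  · rw [bp_none E hlt x h] at hw
    simp at hw
    exact hw.ge
  · rw [bp_some E hlt x h] at hw
    rcases List.mem_cons.1 hw with rfl | hw'
    · exact le_refl _
    · exact le_trans m.2.le (IH w hw')

lemma bp_not_mem_of_lt {l w : Fin n} (h : w < l) : w ∉ bp E hlt x l :=
  fun hw => absurd (bp_mem_ge E hlt x l w hw) (not_le.2 h)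

lemma bp_diPath : ∀ l, IsDiPath E (bp E hlt x l) := by
  refine bp_ind E hlt x _ (fun l h => ?_) (fun l m h IH => ?_)
  · rw [bp_none E hlt x h]; trivial
  · rw [bp_some E hlt x h]
    rcases hbp : bp E hlt x m.1 with _ | ⟨a, t⟩
    · have := bp_head E hlt x m.1; rw [hbp] at this; simp at this
    · have ha : a = m.1 := by
        have := bp_head E hlt x m.1; rw [hbp] at this; simpa using this
      subst ha
      rw [hbp] at IH
      exact ⟨(gstep_spec E hlt x h).1, IH⟩

/-- Edge multiplicities along the greedy path. -/
lemma bp_edgeCount : ∀ l, ∀ a b : Fin n, edgeCount a b (bp E hlt x l) =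
    if a ∈ bp E hlt x l ∧ (gstep E hlt x a).map Subtype.val = some b then 1 else 0 := by
  refine bp_ind E hlt x _ (fun l h a b => ?_) (fun l m h IH a b => ?_)
  · rw [bp_none E hlt x h]
    rw [edgeCount]
    by_cases ha : a = l
    · subst ha
      simp [h]
    · simp [ha, Ne.symm ha]
  · rw [bp_some E hlt x h]
    rcases hbp : bp E hlt x m.1 with _ | ⟨c, t⟩
    · have := bp_head E hlt x m.1; rw [hbp] at this; simp at this
    · have hc : c = m.1 := by
        have := bp_head E hlt x m.1; rw [hbp] at this; simpa using this
      subst hc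
      rw [edgeCount_cons, ← hbp]
      by_cases ha : a = l
      · subst ha
        have hnot : a ∉ bp E hlt x m.1 := bp_not_mem_of_lt E hlt x m.2
        have e2 : edgeCount a b (bp E hlt x m.1) = 0 := by
          rw [IH a b]; exact if_neg (fun hh => hnot hh.1)
        rw [e2, add_zero]
        by_cases hb : (m : Fin n) = b
        · rw [if_pos ⟨rfl, hb⟩,
            if_pos ⟨List.mem_cons_self, by rw [h, Option.map_some, hb]⟩]
        · rw [if_neg (fun hh => hb hh.2), if_neg (fun hh => hb
            (by rw [h, Option.map_some, Option.some.injEq] at hh; exact hh.2))]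
      · rw [IH a b]
        have h1 : ¬ (l = a ∧ (m : Fin n) = b) := fun hh => ha hh.1.symm
        rw [if_neg h1, zero_add]
        by_cases hmem : a ∈ bp E hlt x m.1 ∧ (gstep E hlt x a).map Subtype.val = some b
        · rw [if_pos hmem, if_pos ⟨List.mem_cons_of_mem _ hmem.1, hmem.2⟩]
        · rw [if_neg hmem, if_neg (fun hh => hmem ⟨(List.mem_cons.1 hh.1).resolve_left ha, hh.2⟩)]

end Dir2

variable {n : ℕ} (E : Fin n → Fin n → Prop) [DecidableRel E]
  (hlt : ∀ i j, E i j → i < j) (x : (Fin n → ℝ) × (Fin n → Fin n → ℝ))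

lemma bp_self_mem (l : Fin n) : l ∈ bp E hlt x l :=
  List.mem_of_mem_head? (by rw [bp_head]; rfl)

lemma bp_inN : ∀ s, ∀ l : Fin n, inN (bp E hlt x s) l =
    if l ∈ bp E hlt x s ∧ l ≠ s then 1 else 0 := by
  refine bp_ind E hlt x _ (fun s h l => ?_) (fun s m h IH l => ?_)
  · rw [bp_none E hlt x h]
    have h0 : inN [s] l = 0 := by simp [inN, edgeCount]
    rw [h0]
    symm
    apply if_neg
    rintro ⟨hm, hne⟩
    simp at hm
    exact hne hm
  · rw [bp_some E hlt x h]
    rcases hbp : bp E hlt x m.1 with _ | ⟨c, t⟩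
    · have := bp_head E hlt x m.1; rw [hbp] at this; simp at this
    · have hc : c = m.1 := by
        have := bp_head E hlt x m.1; rw [hbp] at this; simpa using this
      subst hc
      rw [inN_cons, ← hbp, IH l]
      by_cases h1 : (m : Fin n) = l
      · subst h1
        rw [if_pos rfl,
          if_neg (fun hh : (m:Fin n) ∈ bp E hlt x m.1 ∧ (m:Fin n) ≠ (m:Fin n) => hh.2 rfl),
          if_pos ⟨List.mem_cons_of_mem _ (bp_self_mem E hlt x m.1), m.2.ne'⟩]
      · rw [if_neg h1, zero_add]
        by_cases h2 : l = s
        · subst h2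
          rw [if_neg (fun hh : l ∈ bp E hlt x m.1 ∧ l ≠ (m:Fin n) =>
              bp_not_mem_of_lt E hlt x m.2 hh.1),
            if_neg (fun hh : l ∈ l :: bp E hlt x m.1 ∧ l ≠ l => hh.2 rfl)]
        · have hiff : (l ∈ bp E hlt x m.1 ∧ l ≠ (m:Fin n)) ↔
              (l ∈ s :: bp E hlt x m.1 ∧ l ≠ s) := by
            constructor
            · rintro ⟨hl, -⟩
              exact ⟨List.mem_cons_of_mem _ hl, h2⟩
            · rintro ⟨hl, -⟩
              exact ⟨(List.mem_cons.1 hl).resolve_left h2, fun he => h1 he.symm⟩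
          rw [if_congr hiff rfl rfl]

lemma bp_outN : ∀ s, ∀ l : Fin n, outN (bp E hlt x s) l =
    if l ∈ bp E hlt x s ∧ gstep E hlt x l ≠ none then 1 else 0 := by
  refine bp_ind E hlt x _ (fun s h l => ?_) (fun s m h IH l => ?_)
  · rw [bp_none E hlt x h]
    have h0 : outN [s] l = 0 := by simp [outN, edgeCount]
    rw [h0]
    symm
    apply if_neg
    rintro ⟨hm, hne⟩
    simp at hm
    subst hm
    exact hne h
  · rw [bp_some E hlt x h]
    rcases hbp : bp E hlt x m.1 with _ | ⟨c, t⟩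
    · have := bp_head E hlt x m.1; rw [hbp] at this; simp at this
    · have hc : c = m.1 := by
        have := bp_head E hlt x m.1; rw [hbp] at this; simpa using this
      subst hc
      rw [outN_cons, ← hbp, IH l]
      by_cases h1 : s = l
      · subst h1
        rw [if_pos rfl,
          if_neg (fun hh : s ∈ bp E hlt x m.1 ∧ _ => bp_not_mem_of_lt E hlt x m.2 hh.1),
          if_pos ⟨List.mem_cons_self, by rw [h]; exact fun hh => nomatch hh⟩]
      · rw [if_neg h1, zero_add]
        have hiff : (l ∈ bp E hlt x m.1 ∧ gstep E hlt x l ≠ none) ↔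
            (l ∈ s :: bp E hlt x m.1 ∧ gstep E hlt x l ≠ none) := by
          constructor
          · rintro ⟨hl, hg⟩
            exact ⟨List.mem_cons_of_mem _ hl, hg⟩
          · rintro ⟨hl, hg⟩
            exact ⟨(List.mem_cons.1 hl).resolve_left (fun he => h1 he.symm), hg⟩
        rw [if_congr hiff rfl rfl]

lemma bp_in_pos : ∀ s, ∀ l : Fin n, l ∈ bp E hlt x s → l ≠ s →
    ∃ h : Fin n, E h l ∧ 0 < x.2 h l := by
  refine bp_ind E hlt x _ (fun s h l hl hne => ?_) (fun s m h IH l hl hne => ?_)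
  · rw [bp_none E hlt x h] at hl
    simp at hl
    exact absurd hl hne
  · rw [bp_some E hlt x h] at hl
    rcases List.mem_cons.1 hl with rfl | hl'
    · exact absurd rfl hne
    · by_cases hlm : l = (m : Fin n)
      · subst hlm
        exact ⟨s, (gstep_spec E hlt x h).1, (gstep_spec E hlt x h).2⟩
      · exact IH l hl' hlm

lemma diPath_prefix : ∀ (p : List (Fin n)), IsDiPath E p → ∀ a : Fin n, p.head? = some a →
    ∀ w ∈ p, ∃ q, IsDiPath E q ∧ q.head? = some a ∧ q.getLast? = some w
  | [], _, a, ha => by simp at ha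
  | [c], _, a, ha => by
    intro w hw
    simp at hw ha
    subst hw; subst ha
    exact ⟨[w], trivial, rfl, rfl⟩
  | a' :: b :: t, hp, a, ha => by
    intro w hw
    have haa : a' = a := by simpa using ha
    subst haa
    obtain ⟨hab, ht⟩ := diPath_cons hp
    rcases List.mem_cons.1 hw with rfl | hw'
    · exact ⟨[w], trivial, rfl, rfl⟩
    · obtain ⟨q, hq, hqh, hql⟩ := diPath_prefix (b :: t) ht b rfl w hw'
      rcases q with _ | ⟨c, t'⟩
      · simp at hqh
      · have hcb : c = b := by simpa using hqh
        subst hcb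
        refine ⟨a' :: c :: t', ⟨hab, hq⟩, rfl, ?_⟩
        rw [List.getLast?_cons_cons]
        exact hql

lemma toWalk (hlt : ∀ i j, E i j → i < j) : ∀ (p : List (Fin n)), IsDiPath E p → ∀ a w : Fin n,
    p.head? = some a → p.getLast? = some w →
    ∃ W : (underlying E).Walk a w, W.support = p
  | [], _, a, w, ha, _ => by simp at ha
  | [c], _, a, w, ha, hw => by
    have : a = c := by simpa using ha.symm
    subst this
    have : w = a := by simpa using hw.symm
    subst this
    exact ⟨SimpleGraph.Walk.nil, rfl⟩
  | a' :: b :: t, hp, a, w, ha, hw => by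
    have haa : a' = a := by simpa using ha
    subst haa
    obtain ⟨hab, ht⟩ := diPath_cons hp
    rw [List.getLast?_cons_cons] at hw
    obtain ⟨W', hW'⟩ := toWalk hlt (b :: t) ht b w rfl hw
    have hadj : (underlying E).Adj a' b := ⟨ne_of_lt (hlt _ _ hab), Or.inl hab⟩
    exact ⟨SimpleGraph.Walk.cons hadj W', by simp [hW']⟩

lemma bp_disjoint (hac : (underlying E).IsAcyclic) {v m1 m2 : Fin n}
    (h1 : E v m1) (h2 : E v m2) (hne : m1 ≠ m2) (w : Fin n)
    (hw1 : w ∈ bp E hlt x m1) (hw2 : w ∈ bp E hlt x m2) : False := by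
  obtain ⟨q1, hq1, hq1h, hq1l⟩ := diPath_prefix E (bp E hlt x m1) (bp_diPath E hlt x m1) m1
    (bp_head E hlt x m1) w hw1
  obtain ⟨q2, hq2, hq2h, hq2l⟩ := diPath_prefix E (bp E hlt x m2) (bp_diPath E hlt x m2) m2
    (bp_head E hlt x m2) w hw2
  rcases q1 with _ | ⟨c1, t1⟩; · simp at hq1h
  rcases q2 with _ | ⟨c2, t2⟩; · simp at hq2h
  have hc1 : c1 = m1 := by simpa using hq1h
  have hc2 : c2 = m2 := by simpa using hq2h
  rw [hc1] at hq1 hq1l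
  rw [hc2] at hq2 hq2l
  have hL1 : IsDiPath E (v :: m1 :: t1) := ⟨h1, hq1⟩
  have hL2 : IsDiPath E (v :: m2 :: t2) := ⟨h2, hq2⟩
  obtain ⟨W1, hW1⟩ := toWalk E hlt (v :: m1 :: t1) hL1 v w rfl
    (by rw [List.getLast?_cons_cons]; exact hq1l)
  obtain ⟨W2, hW2⟩ := toWalk E hlt (v :: m2 :: t2) hL2 v w rfl
    (by rw [List.getLast?_cons_cons]; exact hq2l)
  have hP1 : W1.IsPath := by
    rw [SimpleGraph.Walk.isPath_def, hW1]
    exact ((List.isChain_iff_pairwise.1 (chain'_of_diPath hlt _ hL1)).imp ne_of_lt)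
  have hP2 : W2.IsPath := by
    rw [SimpleGraph.Walk.isPath_def, hW2]
    exact ((List.isChain_iff_pairwise.1 (chain'_of_diPath hlt _ hL2)).imp ne_of_lt)
  have heq := SimpleGraph.isAcyclic_iff_path_unique.1 hac ⟨W1, hP1⟩ ⟨W2, hP2⟩
  have hsupp : W1.support = W2.support :=
    congrArg (fun P : (underlying E).Path v w => P.1.support) heq
  rw [hW1, hW2] at hsupp
  simp only [List.cons.injEq] at hsupp
  exact hne hsupp.2.1

lemma bp_ec_pos {a b : Fin n} (s : Fin n) (h : edgeCount a b (bp E hlt x s) ≠ 0) :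
    E a b ∧ 0 < x.2 a b := by
  rw [bp_edgeCount E hlt x s a b] at h
  by_cases hc : a ∈ bp E hlt x s ∧ (gstep E hlt x a).map Subtype.val = some b
  · obtain ⟨mm, hmm, hmmb⟩ := Option.map_eq_some_iff.1 hc.2
    have := gstep_spec E hlt x hmm
    rw [hmmb] at this
    exact this
  · rw [if_neg hc] at h
    exact absurd rfl h

lemma bp_shape (s : Fin n) : ∃ t, bp E hlt x s = s :: t := by
  rcases hbp : bp E hlt x s with _ | ⟨c, t⟩
  · have := bp_head E hlt x s; rw [hbp] at this; simp at this
  · have hc : c = s := by have := bp_head E hlt x s; rw [hbp] at this; simpa using this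
    exact ⟨t, by rw [hc]⟩

lemma inN_cons_bp (a s l : Fin n) : inN (a :: bp E hlt x s) l =
    (if s = l then 1 else 0) + inN (bp E hlt x s) l := by
  obtain ⟨t, ht⟩ := bp_shape E hlt x s
  rw [ht, inN_cons]

lemma outN_cons_bp (a s l : Fin n) : outN (a :: bp E hlt x s) l =
    (if a = l then 1 else 0) + outN (bp E hlt x s) l := by
  obtain ⟨t, ht⟩ := bp_shape E hlt x s
  rw [ht, outN_cons]

lemma ec_cons_bp (a s l m : Fin n) : edgeCount l m (a :: bp E hlt x s) =
    (if a = l ∧ s = m then 1 else 0) + edgeCount l m (bp E hlt x s) := by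
  obtain ⟨t, ht⟩ := bp_shape E hlt x s
  rw [ht, edgeCount_cons]

lemma diPath_cons_bp {a s : Fin n} (h : E a s) : IsDiPath E (a :: bp E hlt x s) := by
  obtain ⟨t, ht⟩ := bp_shape E hlt x s
  have hd := bp_diPath E hlt x s
  rw [ht] at hd ⊢
  exact ⟨h, hd⟩

lemma getLast_exists {p : List (Fin n)} (h : p ≠ []) : ∃ w, p.getLast? = some w :=
  ⟨p.getLast h, List.getLast?_eq_getLast h⟩

/-- Index type for the rows of the inequality system. -/
abbrev RowIdx (n : ℕ) := (Fin n) ⊕ ((Fin n × Fin n) ⊕ ((Fin n × Fin n) ⊕ (Fin n)))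

/-- Value of a row of the inequality system at a point. -/
def rowVal (x : (Fin n → ℝ) × (Fin n → Fin n → ℝ)) : RowIdx n → ℝ
  | Sum.inl l => x.1 l
  | Sum.inr (Sum.inl (l, m)) => x.2 l m
  | Sum.inr (Sum.inr (Sum.inl (l, m))) => if E l m then eRow E x l m else 0
  | Sum.inr (Sum.inr (Sum.inr l)) => vRow E x l

lemma rowVal_nonneg {x : (Fin n → ℝ) × (Fin n → Fin n → ℝ)} (hx : x ∈ QPoly E) :
    ∀ r, 0 ≤ rowVal E x r := by
  obtain ⟨h1, h2, h3, _, h5, h6⟩ := hx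
  rintro (l | ⟨l, m⟩ | ⟨l, m⟩ | l)
  · exact h1 l
  · by_cases hE : E l m
    · exact h2 l m hE
    · exact le_of_eq (h3 l m hE).symm
  · show 0 ≤ if E l m then eRow E x l m else 0
    by_cases hE : E l m
    · rw [if_pos hE]
      exact h5 l m hE
    · rw [if_neg hE]
  · exact h6 l

lemma smul_sub_fst (c t : ℝ) (x e : (Fin n → ℝ) × (Fin n → Fin n → ℝ)) (l : Fin n) :
    (c • (x - t • e)).1 l = c * (x.1 l - t * e.1 l) := rfl

lemma smul_sub_snd (c t : ℝ) (x e : (Fin n → ℝ) × (Fin n → Fin n → ℝ)) (l m : Fin n) :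
    (c • (x - t • e)).2 l m = c * (x.2 l m - t * e.2 l m) := rfl

lemma INx_comb (c t : ℝ) (x e : (Fin n → ℝ) × (Fin n → Fin n → ℝ)) (l : Fin n) :
    INx E (c • (x - t • e)) l = c * (INx E x l - t * INx E e l) := by
  unfold INx
  have hcongr : ∀ h ∈ Finset.univ.filter (fun h => E h l),
      (c • (x - t • e)).2 h l = c * x.2 h l - c * t * e.2 h l := fun h _ => by
    rw [smul_sub_snd]; ring
  rw [Finset.sum_congr rfl hcongr, Finset.sum_sub_distrib, ← Finset.mul_sum, ← Finset.mul_sum]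
  ring

lemma OUTx_comb (c t : ℝ) (x e : (Fin n → ℝ) × (Fin n → Fin n → ℝ)) (l : Fin n) :
    OUTx E (c • (x - t • e)) l = c * (OUTx E x l - t * OUTx E e l) := by
  unfold OUTx
  have hcongr : ∀ m ∈ Finset.univ.filter (fun m => E l m),
      (c • (x - t • e)).2 l m = c * x.2 l m - c * t * e.2 l m := fun m _ => by
    rw [smul_sub_snd]; ring
  rw [Finset.sum_congr rfl hcongr, Finset.sum_sub_distrib, ← Finset.mul_sum, ← Finset.mul_sum]
  ring

lemma rowVal_comb (c t : ℝ) (x e : (Fin n → ℝ) × (Fin n → Fin n → ℝ)) :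
    ∀ r, rowVal E (c • (x - t • e)) r = c * (rowVal E x r - t * rowVal E e r) := by
  rintro (l | ⟨l, m⟩ | ⟨l, m⟩ | l)
  · exact smul_sub_fst c t x e l
  · exact smul_sub_snd c t x e l m
  · show (if E l m then eRow E (c • (x - t • e)) l m else 0) =
      c * ((if E l m then eRow E x l m else 0) - t * (if E l m then eRow E e l m else 0))
    by_cases hE : E l m
    · rw [if_pos hE, if_pos hE, if_pos hE]
      unfold eRow
      rw [INx_comb, smul_sub_fst, smul_sub_snd]
      ring
    · rw [if_neg hE, if_neg hE, if_neg hE]; ring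
  · show vRow E (c • (x - t • e)) l = c * (vRow E x l - t * vRow E e l)
    unfold vRow
    rw [INx_comb, OUTx_comb, smul_sub_fst]
    ring

lemma sum_fst_comb (c t : ℝ) (x e : (Fin n → ℝ) × (Fin n → Fin n → ℝ)) :
    ∑ l, (c • (x - t • e)).1 l = c * ((∑ l, x.1 l) - t * ∑ l, e.1 l) := by
  have hcongr : ∀ l ∈ (Finset.univ : Finset (Fin n)),
      (c • (x - t • e)).1 l = c * x.1 l - c * t * e.1 l := fun l _ => by
    rw [smul_sub_fst]; ring
  rw [Finset.sum_congr rfl hcongr, Finset.sum_sub_distrib, ← Finset.mul_sum, ← Finset.mul_sum]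
  ring

open Classical in
/-- The set of rows that are not tight at `x`. -/
noncomputable def nontight (x : (Fin n → ℝ) × (Fin n → Fin n → ℝ)) : Finset (RowIdx n) :=
  Finset.univ.filter (fun r => rowVal E x r ≠ 0)

lemma INx_nonneg {x : (Fin n → ℝ) × (Fin n → Fin n → ℝ)} (hx : x ∈ QPoly E) (l : Fin n) :
    0 ≤ INx E x l :=
  Finset.sum_nonneg fun h hh => hx.2.1 h l (Finset.mem_filter.1 hh).2

lemma INx_pos_of_wit {x : (Fin n → ℝ) × (Fin n → Fin n → ℝ)} (hx : x ∈ QPoly E) {l h : Fin n}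
    (hE : E h l) (hpos : 0 < x.2 h l) : 0 < INx E x l :=
  lt_of_lt_of_le hpos (Finset.single_le_sum
    (fun i hi => hx.2.1 i l (Finset.mem_filter.1 hi).2)
    (Finset.mem_filter.2 ⟨Finset.mem_univ _, hE⟩))

lemma exists_pos_out {x : (Fin n → ℝ) × (Fin n → Fin n → ℝ)} (hx : x ∈ QPoly E) {l : Fin n}
    (h : 0 < OUTx E x l) : ∃ m, E l m ∧ 0 < x.2 l m := by
  obtain ⟨m, hm, hne⟩ := Finset.exists_ne_zero_of_sum_ne_zero (ne_of_gt h)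
  have hE : E l m := (Finset.mem_filter.1 hm).2
  exact ⟨m, hE, lt_of_le_of_ne (hx.2.1 l m hE) (Ne.symm hne)⟩

lemma tight_unique {x : (Fin n → ℝ) × (Fin n → Fin n → ℝ)} (hx : x ∈ QPoly E) {l : Fin n}
    (hpos : 0 < x.1 l + INx E x l) {m m' : Fin n} (hEm : E l m) (hEm' : E l m')
    (h1 : eRow E x l m = 0) (h2 : eRow E x l m' = 0) : m = m' := by
  by_contra hne
  have hsubset : ({m, m'} : Finset (Fin n)) ⊆ Finset.univ.filter (fun i => E l i) := by
    intro i hi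
    rcases Finset.mem_insert.1 hi with rfl | hi'
    · exact Finset.mem_filter.2 ⟨Finset.mem_univ _, hEm⟩
    · rw [Finset.mem_singleton.1 hi']
      exact Finset.mem_filter.2 ⟨Finset.mem_univ _, hEm'⟩
  have hsub : x.2 l m + x.2 l m' ≤ OUTx E x l := by
    rw [← Finset.sum_pair hne]
    exact Finset.sum_le_sum_of_subset_of_nonneg hsubset
      (fun i hi _ => hx.2.1 l i (Finset.mem_filter.1 hi).2)
  have hv : (0:ℝ) ≤ 3 * x.1 l + INx E x l - OUTx E x l := hx.2.2.2.2.2 l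
  unfold eRow at h1 h2
  linarith

lemma gstep_tight {x : (Fin n → ℝ) × (Fin n → Fin n → ℝ)} (hlt : ∀ i j, E i j → i < j)
    (hx : x ∈ QPoly E) {l m : Fin n} (hE : E l m) (ht : eRow E x l m = 0)
    (hpos : 0 < x.1 l + INx E x l) :
    ∃ mt, gstep E hlt x l = some mt ∧ mt.1 = m := by
  have hy : 0 < x.2 l m := by
    have h1 := hx.1 l
    unfold eRow at ht
    linarith
  obtain ⟨mt, hmt, hE', hp', ht'⟩ := gstep_of_P1 E hlt x ⟨m, hE, hy, ht⟩
  exact ⟨mt, hmt, tight_unique E hx hpos hE' hE ht' ht⟩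

lemma gstep_some_of_vtight {x : (Fin n → ℝ) × (Fin n → Fin n → ℝ)} (hlt : ∀ i j, E i j → i < j)
    (hx : x ∈ QPoly E) {l : Fin n} (hvt : vRow E x l = 0) (hpos : 0 < x.1 l + INx E x l) :
    ∃ m, gstep E hlt x l = some m := by
  have hOUT : 0 < OUTx E x l := by
    unfold vRow at hvt
    have := hx.1 l
    have := INx_nonneg E hx l
    linarith
  exact gstep_of_P2 E hlt x ⟨hvt, exists_pos_out E hx hOUT⟩

lemma exists_good_core {x : (Fin n → ℝ) × (Fin n → Fin n → ℝ)} (hlt : ∀ i j, E i j → i < j)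
    (hx : x ∈ QPoly E) {v : Fin n} (hv : 0 < x.1 v)
    {m1 : {m : Fin n // v < m}} (hstep : gstep E hlt x v = some m1)
    (r : List (Fin n)) (hrd : IsDiPath E r) (hrh : r.head? = some v) (hrne : r ≠ [])
    (hrA : ∀ a b, edgeCount a b r ≠ 0 → 0 < x.2 a b)
    (hrout_v : vRow E x v = 0 → outN r v = 1)
    (hrC : edgeCount v m1.1 r = 0)
    (hrinv : inN r v = 0)
    (hrmem : ∀ l, l ∈ r → l ≠ v → l ∉ bp E hlt x v ∧ inN r l = 1 ∧ 0 < INx E x l)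
    (hrnot : ∀ l, l ∉ r → inN r l = 0 ∧ outN r l = 0 ∧ ∀ b, edgeCount l b r = 0)
    (hrout : ∀ l, l ∈ r → l ≠ v → gstep E hlt x l ≠ none → outN r l = 1)
    (hrec : ∀ l b, l ∈ r → l ≠ v → edgeCount l b r =
      if (gstep E hlt x l).map Subtype.val = some b then 1 else 0)
    (hsimple : ∀ w, w ∈ bp E hlt x v → w ∈ r → w = v) :
    ∃ e, (∃ i j k v' p' q' r', IsSimpleTrek3 E v' p' q' r' i j k ∧ e = trekPoint v' p' q' r') ∧
      e.1 v = 1 ∧ ∀ rr : RowIdx n, rowVal E x rr = 0 → rowVal E e rr = 0 := by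
  have hz : ∀ l, 0 ≤ x.1 l := hx.1
  have hE1 : E v m1.1 := (gstep_spec E hlt x hstep).1
  have hpd : IsDiPath E (bp E hlt x v) := bp_diPath E hlt x v
  have hph := bp_head E hlt x v
  have hinPv : inN (bp E hlt x v) v = 0 := inN_head_eq_zero hlt hpd hph
  refine ⟨trekPoint v (bp E hlt x v) (bp E hlt x v) r, ?_, ?_, ?_⟩
  · obtain ⟨ip, hip⟩ := getLast_exists (List.ne_nil_of_mem (bp_self_mem E hlt x v))
    obtain ⟨kr, hkr⟩ := getLast_exists hrne
    exact ⟨ip, ip, kr, v, _, _, r, ⟨⟨⟨hpd, hph, hip⟩, ⟨hpd, hph, hip⟩, ⟨hrd, hrh, hkr⟩⟩,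
      fun w hw _ hwr => hsimple w hw hwr⟩, rfl⟩
  · simp [trekPoint]
  · have hEIN : ∀ l, INx E (trekPoint v (bp E hlt x v) (bp E hlt x v) r) l =
        ((inN (bp E hlt x v) l + inN (bp E hlt x v) l + inN r l : ℕ) : ℝ) := by
      intro l
      unfold INx
      simp only [trekPoint]
      rw [← Nat.cast_sum]
      congr 1
      rw [Finset.sum_add_distrib, Finset.sum_add_distrib, filter_in_eq hpd, filter_in_eq hrd]
    have hEOUT : ∀ l, OUTx E (trekPoint v (bp E hlt x v) (bp E hlt x v) r) l =
        ((outN (bp E hlt x v) l + outN (bp E hlt x v) l + outN r l : ℕ) : ℝ) := by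
      intro l
      unfold OUTx
      simp only [trekPoint]
      rw [← Nat.cast_sum]
      congr 1
      rw [Finset.sum_add_distrib, Finset.sum_add_distrib, filter_out_eq hpd, filter_out_eq hrd]
    rintro (l | ⟨a, b⟩ | ⟨l, m⟩ | l) hrow
    · -- z-row
      have hlv : l ≠ v := fun h => by rw [h] at hrow; exact absurd hrow (ne_of_gt hv)
      show (if l = v then (1:ℝ) else 0) = 0
      rw [if_neg hlv]
    · -- y-row
      have hrow' : x.2 a b = 0 := hrow
      show ((edgeCount a b (bp E hlt x v) + edgeCount a b (bp E hlt x v)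
          + edgeCount a b r : ℕ) : ℝ) = 0
      have h1 : edgeCount a b (bp E hlt x v) = 0 := by
        by_contra hh
        have := (bp_ec_pos E hlt x v hh).2
        rw [hrow'] at this
        exact lt_irrefl 0 this
      have h2 : edgeCount a b r = 0 := by
        by_contra hh
        have := hrA a b hh
        rw [hrow'] at this
        exact lt_irrefl 0 this
      rw [h1, h2]
      norm_num
    · -- edge row
      show (if E l m then eRow E (trekPoint v (bp E hlt x v) (bp E hlt x v) r) l m else 0) = 0
      by_cases hE : E l m
      swap
      · rw [if_neg hE]
      rw [if_pos hE]
      have hrow' : eRow E x l m = 0 := by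
        have : (if E l m then eRow E x l m else 0) = 0 := hrow
        rwa [if_pos hE] at this
      have hgoal : ∀ zN iN cN : ℕ, (trekPoint v (bp E hlt x v) (bp E hlt x v) r).1 l =
          (zN : ℝ) → inN (bp E hlt x v) l + inN (bp E hlt x v) l + inN r l = iN →
          edgeCount l m (bp E hlt x v) + edgeCount l m (bp E hlt x v) + edgeCount l m r = cN →
          2 * (zN : ℝ) + (iN : ℝ) - (cN : ℝ) = 0 →
          eRow E (trekPoint v (bp E hlt x v) (bp E hlt x v) r) l m = 0 := by
        intro zN iN cN h1 h2 h3 h4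
        unfold eRow
        rw [hEIN l, h1, h2]
        show 2 * (zN : ℝ) + (iN : ℝ) -
          ((edgeCount l m (bp E hlt x v) + edgeCount l m (bp E hlt x v)
            + edgeCount l m r : ℕ) : ℝ) = 0
        rw [h3]
        exact h4
      by_cases hlv : l = v
      · subst hlv
        -- l = v : tight edge at the top forces m = m1
        have hINn : 0 ≤ INx E x l := INx_nonneg E hx l
        have hpos : 0 < x.1 l + INx E x l := by linarith
        obtain ⟨mt, hmt, hmteq⟩ := gstep_tight E hlt hx hE hrow' hpos
        have hmm : m1 = mt := Option.some.inj (hstep.symm.trans hmt)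
        have hm1m : m1.1 = m := by rw [hmm, hmteq]
        have hecP : edgeCount l m (bp E hlt x l) = 1 := by
          rw [bp_edgeCount]
          exact if_pos ⟨bp_self_mem E hlt x l, by rw [hstep, Option.map_some, hm1m]⟩
        have hecr : edgeCount l m r = 0 := hm1m ▸ hrC
        refine hgoal 1 0 2 (by simp [trekPoint]) ?_ ?_ (by norm_num)
        · rw [hinPv, hrinv]
        · rw [hecP, hecr]
      · by_cases hlp : l ∈ bp E hlt x v
        · -- l on the doubled path
          have hlr : l ∉ r := fun hr => (hrmem l hr hlv).1 hlp
          obtain ⟨h0, hE0, hp0⟩ := bp_in_pos E hlt x v l hlp hlv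
          have hINpos : 0 < INx E x l := INx_pos_of_wit E hx hE0 hp0
          have hpos : 0 < x.1 l + INx E x l := by have := hz l; linarith
          obtain ⟨mt, hmt, hmteq⟩ := gstep_tight E hlt hx hE hrow' hpos
          have hecP : edgeCount l m (bp E hlt x v) = 1 := by
            rw [bp_edgeCount]
            exact if_pos ⟨hlp, by rw [hmt, Option.map_some, hmteq]⟩
          refine hgoal 0 2 2 (by simp [trekPoint, hlv]) ?_ ?_ (by norm_num)
          · rw [bp_inN, if_pos ⟨hlp, hlv⟩, (hrnot l hlr).1]
          · rw [hecP, (hrnot l hlr).2.2 m]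
        · by_cases hlr : l ∈ r
          · -- l on the third path
            obtain ⟨hlnp, hin1, hINpos⟩ := hrmem l hlr hlv
            have hpos : 0 < x.1 l + INx E x l := by have := hz l; linarith
            obtain ⟨mt, hmt, hmteq⟩ := gstep_tight E hlt hx hE hrow' hpos
            have hecr : edgeCount l m r = 1 := by
              rw [hrec l m hlr hlv]
              exact if_pos (by rw [hmt, Option.map_some, hmteq])
            have hecP : edgeCount l m (bp E hlt x v) = 0 := by
              rw [bp_edgeCount]
              exact if_neg (fun hh => hlp hh.1)
            refine hgoal 0 1 1 (by simp [trekPoint, hlv]) ?_ ?_ (by norm_num)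
            · rw [bp_inN, if_neg (fun hh => hlp hh.1), hin1]
            · rw [hecP, hecr]
          · -- l nowhere
            have hecP : edgeCount l m (bp E hlt x v) = 0 := by
              rw [bp_edgeCount]
              exact if_neg (fun hh => hlp hh.1)
            refine hgoal 0 0 0 (by simp [trekPoint, hlv]) ?_ ?_ (by norm_num)
            · rw [bp_inN, if_neg (fun hh => hlp hh.1), (hrnot l hlr).1]
            · rw [hecP, (hrnot l hlr).2.2 m]
    · -- vertex row
      have hrow' : vRow E x l = 0 := hrow
      show vRow E (trekPoint v (bp E hlt x v) (bp E hlt x v) r) l = 0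
      have hgoal : ∀ zN iN oN : ℕ, (trekPoint v (bp E hlt x v) (bp E hlt x v) r).1 l = (zN : ℝ) →
          inN (bp E hlt x v) l + inN (bp E hlt x v) l + inN r l = iN →
          outN (bp E hlt x v) l + outN (bp E hlt x v) l + outN r l = oN →
          3 * (zN : ℝ) + (iN : ℝ) - (oN : ℝ) = 0 →
          vRow E (trekPoint v (bp E hlt x v) (bp E hlt x v) r) l = 0 := by
        intro zN iN oN h1 h2 h3 h4
        unfold vRow
        rw [hEIN l, hEOUT l, h1, h2, h3]
        exact h4
      by_cases hlv : l = v
      · subst hlv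
        have houtP : outN (bp E hlt x l) l = 1 := by
          rw [bp_outN]
          exact if_pos ⟨bp_self_mem E hlt x l, by rw [hstep]; exact fun h => nomatch h⟩
        refine hgoal 1 0 3 (by simp [trekPoint]) ?_ ?_ (by norm_num)
        · rw [hinPv, hrinv]
        · rw [houtP, hrout_v hrow']
      · by_cases hlp : l ∈ bp E hlt x v
        · have hlr : l ∉ r := fun hr => (hrmem l hr hlv).1 hlp
          obtain ⟨h0, hE0, hp0⟩ := bp_in_pos E hlt x v l hlp hlv
          have hINpos : 0 < INx E x l := INx_pos_of_wit E hx hE0 hp0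
          have hpos : 0 < x.1 l + INx E x l := by have := hz l; linarith
          obtain ⟨mg, hmg⟩ := gstep_some_of_vtight E hlt hx hrow' hpos
          have houtP : outN (bp E hlt x v) l = 1 := by
            rw [bp_outN]
            exact if_pos ⟨hlp, by rw [hmg]; exact fun h => nomatch h⟩
          refine hgoal 0 2 2 (by simp [trekPoint, hlv]) ?_ ?_ (by norm_num)
          · rw [bp_inN, if_pos ⟨hlp, hlv⟩, (hrnot l hlr).1]
          · rw [houtP, (hrnot l hlr).2.1]
        · by_cases hlr : l ∈ r
          · obtain ⟨hlnp, hin1, hINpos⟩ := hrmem l hlr hlv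
            have hpos : 0 < x.1 l + INx E x l := by have := hz l; linarith
            obtain ⟨mg, hmg⟩ := gstep_some_of_vtight E hlt hx hrow' hpos
            have houtr : outN r l = 1 :=
              hrout l hlr hlv (by rw [hmg]; exact fun h => nomatch h)
            have houtP : outN (bp E hlt x v) l = 0 := by
              rw [bp_outN]
              exact if_neg (fun hh => hlp hh.1)
            refine hgoal 0 1 1 (by simp [trekPoint, hlv]) ?_ ?_ (by norm_num)
            · rw [bp_inN, if_neg (fun hh => hlp hh.1), hin1]
            · rw [houtP, houtr]
          · have houtP : outN (bp E hlt x v) l = 0 := by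
              rw [bp_outN]
              exact if_neg (fun hh => hlp hh.1)
            refine hgoal 0 0 0 (by simp [trekPoint, hlv]) ?_ ?_ (by norm_num)
            · rw [bp_inN, if_neg (fun hh => hlp hh.1), (hrnot l hlr).1]
            · rw [houtP, (hrnot l hlr).2.1]

lemma exists_good (hG : IsPolytree E) {x : (Fin n → ℝ) × (Fin n → Fin n → ℝ)}
    (hx : x ∈ QPoly E) {v : Fin n} (hv : 0 < x.1 v) :
    ∃ e, (∃ i j k v' p' q' r', IsSimpleTrek3 E v' p' q' r' i j k ∧ e = trekPoint v' p' q' r') ∧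
      e.1 v = 1 ∧ ∀ rr : RowIdx n, rowVal E x rr = 0 → rowVal E e rr = 0 := by
  have hlt := hG.1
  rcases hstep : gstep E hlt x v with _ | m1
  · -- the path construction stops immediately: the trivial trek at `v`
    refine ⟨trekPoint v [v] [v] [v], ⟨v, v, v, v, [v], [v], [v],
      ⟨⟨⟨trivial, rfl, rfl⟩, ⟨trivial, rfl, rfl⟩, ⟨trivial, rfl, rfl⟩⟩,
        fun w hw _ _ => by simpa using hw⟩, rfl⟩, by simp [trekPoint], ?_⟩
    have hIN0 : ∀ l, INx E (trekPoint v [v] [v] [v]) l = 0 := by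
      intro l
      refine Finset.sum_eq_zero fun h _ => ?_
      simp [trekPoint, edgeCount]
    have hOUT0 : ∀ l, OUTx E (trekPoint v [v] [v] [v]) l = 0 := by
      intro l
      refine Finset.sum_eq_zero fun h _ => ?_
      simp [trekPoint, edgeCount]
    rintro (l | ⟨a, b⟩ | ⟨l, m⟩ | l) hrow
    · have hlv : l ≠ v := fun h => by rw [h] at hrow; exact absurd hrow (ne_of_gt hv)
      show (if l = v then (1:ℝ) else 0) = 0
      rw [if_neg hlv]
    · show ((edgeCount a b [v] + edgeCount a b [v] + edgeCount a b [v] : ℕ) : ℝ) = 0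
      simp [edgeCount]
    · show (if E l m then eRow E (trekPoint v [v] [v] [v]) l m else 0) = 0
      by_cases hE : E l m
      swap
      · rw [if_neg hE]
      rw [if_pos hE]
      have hrow' : eRow E x l m = 0 := by
        have : (if E l m then eRow E x l m else 0) = 0 := hrow
        rwa [if_pos hE] at this
      have hlv : l ≠ v := by
        rintro rfl
        have hpos : 0 < x.1 l + INx E x l := by have := INx_nonneg E hx l; linarith
        obtain ⟨mt, hmt, -⟩ := gstep_tight E hlt hx hE hrow' hpos
        rw [hstep] at hmt
        exact nomatch hmt
      unfold eRow
      rw [hIN0 l]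
      have h2 : (trekPoint v [v] [v] [v]).2 l m = 0 := by simp [trekPoint, edgeCount]
      have h1 : (trekPoint v [v] [v] [v]).1 l = 0 := by simp [trekPoint, hlv]
      rw [h1, h2]
      ring
    · have hrow' : vRow E x l = 0 := hrow
      show vRow E (trekPoint v [v] [v] [v]) l = 0
      have hlv : l ≠ v := by
        rintro rfl
        have hpos : 0 < x.1 l + INx E x l := by have := INx_nonneg E hx l; linarith
        obtain ⟨mg, hmg⟩ := gstep_some_of_vtight E hlt hx hrow' hpos
        rw [hstep] at hmg
        exact nomatch hmg
      unfold vRow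
      rw [hIN0 l, hOUT0 l]
      have h1 : (trekPoint v [v] [v] [v]).1 l = 0 := by simp [trekPoint, hlv]
      rw [h1]
      ring
  · -- the path construction takes at least one step
    have hE1 : E v m1.1 := (gstep_spec E hlt x hstep).1
    have hvm2notmem : ∀ m2 : Fin n, E v m2 → v ∉ bp E hlt x m2 := fun m2 h =>
      bp_not_mem_of_lt E hlt x (hlt v m2 h)
    by_cases hvt : vRow E x v = 0
    · -- the top is vertex-tight: the third path must leave along a second edge
      have hm1mem : m1.1 ∈ Finset.univ.filter (fun m => E v m) :=
        Finset.mem_filter.2 ⟨Finset.mem_univ _, hE1⟩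
      have hedge1 : (0:ℝ) ≤ 2 * x.1 v + INx E x v - x.2 v m1.1 := hx.2.2.2.2.1 v m1.1 hE1
      have hsplit : x.2 v m1.1 + ∑ m ∈ (Finset.univ.filter (fun m => E v m)).erase m1.1,
          x.2 v m = OUTx E x v := Finset.add_sum_erase _ _ hm1mem
      have hsum_pos : (0:ℝ) < ∑ m ∈ (Finset.univ.filter (fun m => E v m)).erase m1.1,
          x.2 v m := by
        unfold vRow at hvt
        linarith
      obtain ⟨m2, hm2mem, hm2ne0⟩ := Finset.exists_ne_zero_of_sum_ne_zero (ne_of_gt hsum_pos)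
      have hm2ne : m2 ≠ m1.1 := (Finset.mem_erase.1 hm2mem).1
      have hE2 : E v m2 := (Finset.mem_filter.1 (Finset.mem_of_mem_erase hm2mem)).2
      have hpos2 : 0 < x.2 v m2 := lt_of_le_of_ne (hx.2.1 v m2 hE2) (Ne.symm hm2ne0)
      have hvn2 : v ∉ bp E hlt x m2 := hvm2notmem m2 hE2
      have hdisj : ∀ w, w ∈ bp E hlt x m1.1 → w ∈ bp E hlt x m2 → False := fun w hw1 hw2 =>
        bp_disjoint E hlt x hG.2.IsAcyclic hE1 hE2 (fun h => hm2ne h.symm) w hw1 hw2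
      refine exists_good_core E hlt hx hv hstep (v :: bp E hlt x m2)
        (diPath_cons_bp E hlt x hE2) rfl (by simp) ?_ ?_ ?_ ?_ ?_ ?_ ?_ ?_ ?_
      · -- positivity of used edges
        intro a b hab
        rw [ec_cons_bp] at hab
        by_cases hc : v = a ∧ m2 = b
        · rw [← hc.1, ← hc.2]
          exact hpos2
        · have : edgeCount a b (bp E hlt x m2) ≠ 0 := by simpa [hc] using hab
          exact (bp_ec_pos E hlt x m2 this).2
      · -- out-degree at the top
        intro _
        rw [outN_cons_bp, if_pos rfl, bp_outN, if_neg (fun hh => hvn2 hh.1)]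
      · -- the second edge is not the first one
        rw [ec_cons_bp, if_neg (fun hh => hm2ne hh.2), zero_add, bp_edgeCount,
          if_neg (fun hh => hvn2 hh.1)]
      · exact inN_head_eq_zero hlt (diPath_cons_bp E hlt x hE2) rfl
      · -- interior vertices of the third path
        intro l hl hlv
        have hl' : l ∈ bp E hlt x m2 := (List.mem_cons.1 hl).resolve_left hlv
        refine ⟨?_, ?_, ?_⟩
        · intro hlp
          rw [bp_some E hlt x hstep] at hlp
          rcases List.mem_cons.1 hlp with rfl | hlp'
          · exact hlv rfl
          · exact hdisj l hlp' hl'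
        · rw [inN_cons_bp]
          by_cases hlm2 : m2 = l
          · rw [if_pos hlm2, bp_inN, if_neg (fun hh => hh.2 hlm2.symm)]
          · rw [if_neg hlm2, bp_inN, if_pos ⟨hl', fun h => hlm2 h.symm⟩, zero_add]
        · by_cases hlm2 : m2 = l
          · exact INx_pos_of_wit E hx (hlm2 ▸ hE2) (hlm2 ▸ hpos2)
          · obtain ⟨h0, hE0, hp0⟩ := bp_in_pos E hlt x m2 l hl' (fun h => hlm2 h.symm)
            exact INx_pos_of_wit E hx hE0 hp0
      · -- vertices not on the third path
        intro l hl
        have hlv : l ≠ v := fun h => hl (by rw [h]; exact List.mem_cons_self)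
        have hl2 : l ∉ bp E hlt x m2 := fun h => hl (List.mem_cons_of_mem _ h)
        refine ⟨?_, ?_, fun b => ?_⟩
        · rw [inN_cons_bp, if_neg (fun h : m2 = l => hl2 (by rw [← h]; exact bp_self_mem E hlt x m2)), bp_inN,
            if_neg (fun hh => hl2 hh.1), zero_add]
        · rw [outN_cons_bp, if_neg (fun h => hlv h.symm), bp_outN,
            if_neg (fun hh => hl2 hh.1), zero_add]
        · rw [ec_cons_bp, if_neg (fun hh => hlv hh.1.symm), bp_edgeCount,
            if_neg (fun hh => hl2 hh.1), zero_add]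
      · -- out-degree of interior vertices
        intro l hl hlv hg
        have hl' : l ∈ bp E hlt x m2 := (List.mem_cons.1 hl).resolve_left hlv
        rw [outN_cons_bp, if_neg (fun h => hlv h.symm), bp_outN, if_pos ⟨hl', hg⟩, zero_add]
      · -- edge counts of interior vertices
        intro l b hl hlv
        have hl' : l ∈ bp E hlt x m2 := (List.mem_cons.1 hl).resolve_left hlv
        rw [ec_cons_bp, if_neg (fun hh => hlv hh.1.symm), zero_add, bp_edgeCount,
          if_congr (and_iff_right hl') rfl rfl]
      · -- simpleness
        intro w hw hwr
        rcases List.mem_cons.1 hwr with rfl | hwr'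
        · rfl
        · rw [bp_some E hlt x hstep] at hw
          rcases List.mem_cons.1 hw with rfl | hw'
          · rfl
          · exact absurd (hdisj w hw' hwr') not_false
    · -- the top is not vertex-tight: the third path is trivial
      refine exists_good_core E hlt hx hv hstep [v] trivial rfl (by simp) ?_ ?_ ?_ ?_ ?_ ?_ ?_ ?_ ?_
      · intro a b hab
        exact absurd rfl hab
      · intro h
        exact absurd h hvt
      · rfl
      · simp [inN, edgeCount]
      · intro l hl hlv
        exact absurd (by simpa using hl) hlv
      · intro l hl
        refine ⟨by simp [inN, edgeCount], by simp [outN, edgeCount], fun b => rfl⟩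
      · intro l hl hlv
        exact absurd (by simpa using hl) hlv
      · intro l b hl hlv
        exact absurd (by simpa using hl) hlv
      · intro w _ hwr
        simpa using hwr

lemma mem_QPoly_of_rows (x : (Fin n → ℝ) × (Fin n → Fin n → ℝ))
    (h1 : ∀ rr : RowIdx n, 0 ≤ rowVal E x rr)
    (h3 : ∀ l m, ¬ E l m → x.2 l m = 0)
    (h4 : ∑ l, x.1 l = 1) : x ∈ QPoly E := by
  refine ⟨fun l => h1 (Sum.inl l), fun l m _ => h1 (Sum.inr (Sum.inl (l, m))), h3, h4,
    fun l m hE => ?_, fun l => h1 (Sum.inr (Sum.inr (Sum.inr l)))⟩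
  have := h1 (Sum.inr (Sum.inr (Sum.inl (l, m))))
  have h' : (0:ℝ) ≤ if E l m then eRow E x l m else 0 := this
  rwa [if_pos hE] at h'

lemma QPoly_subset_aux (hG : IsPolytree E) :
    ∀ N : ℕ, ∀ x, x ∈ QPoly E → (nontight E x).card ≤ N → x ∈ momentPolytope E := by
  intro N
  induction N with
  | zero =>
    intro x hx hcard
    exfalso
    have hall : ∀ l : Fin n, x.1 l = 0 := by
      intro l
      by_contra h
      have hmem : (Sum.inl l : RowIdx n) ∈ nontight E x := by
        rw [nontight, Finset.mem_filter]
        exact ⟨Finset.mem_univ _, h⟩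
      have := Finset.card_pos.2 ⟨_, hmem⟩
      omega
    have hsum := hx.2.2.2.1
    rw [Finset.sum_eq_zero (fun l _ => hall l)] at hsum
    exact zero_ne_one hsum
  | succ N IH =>
    intro x hx hcard
    obtain ⟨v, -, hvne⟩ := Finset.exists_ne_zero_of_sum_ne_zero
      (by rw [hx.2.2.2.1]; exact one_ne_zero : (∑ l, x.1 l) ≠ 0)
    have hv : 0 < x.1 v := lt_of_le_of_ne (hx.1 v) (Ne.symm hvne)
    obtain ⟨e, heG, hev, htight⟩ := exists_good E hG hx hv
    have heQ : e ∈ QPoly E := by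
      obtain ⟨i, j, k, v', p', q', r', hst, rfl⟩ := heG
      exact trekPoint_mem_QPoly hG.1 hst
    have heM : e ∈ momentPolytope E := subset_convexHull ℝ _ heG
    classical
    set S := (nontight E x).filter (fun rr => 0 < rowVal E e rr) with hS
    have hvS : (Sum.inl v : RowIdx n) ∈ S := by
      refine Finset.mem_filter.2 ⟨?_, ?_⟩
      · rw [nontight, Finset.mem_filter]
        exact ⟨Finset.mem_univ _, hvne⟩
      · show (0:ℝ) < rowVal E e (Sum.inl v)
        show (0:ℝ) < e.1 v
        rw [hev]
        norm_num
    have hSne : S.Nonempty := ⟨_, hvS⟩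
    have hTne : (S.image (fun rr => rowVal E x rr / rowVal E e rr)).Nonempty := hSne.image _
    set t := (S.image (fun rr => rowVal E x rr / rowVal E e rr)).min' hTne with ht
    obtain ⟨r0, hr0S, hr0t⟩ := Finset.mem_image.1
      ((S.image (fun rr => rowVal E x rr / rowVal E e rr)).min'_mem hTne)
    rw [← ht] at hr0t
    have hr0nt : r0 ∈ nontight E x := (Finset.mem_filter.1 hr0S).1
    have hr0ne : rowVal E x r0 ≠ 0 := by
      rw [nontight, Finset.mem_filter] at hr0nt
      exact hr0nt.2
    have hr0x : 0 < rowVal E x r0 := lt_of_le_of_ne (rowVal_nonneg E hx r0) (Ne.symm hr0ne)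
    have hr0e : 0 < rowVal E e r0 := (Finset.mem_filter.1 hr0S).2
    have htpos : 0 < t := by
      rw [← hr0t]
      exact div_pos hr0x hr0e
    have htle : ∀ rr ∈ S, t ≤ rowVal E x rr / rowVal E e rr := fun rr hrr =>
      Finset.min'_le _ _ (Finset.mem_image_of_mem _ hrr)
    have hmain : ∀ rr, t * rowVal E e rr ≤ rowVal E x rr := by
      intro rr
      by_cases h0 : rowVal E x rr = 0
      · rw [h0, htight rr h0, mul_zero]
      · by_cases hpos : 0 < rowVal E e rr
        · have hrrS : rr ∈ S := Finset.mem_filter.2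
            ⟨by rw [nontight, Finset.mem_filter]; exact ⟨Finset.mem_univ _, h0⟩, hpos⟩
          exact (le_div_iff₀ hpos).1 (htle rr hrrS)
        · have he0 : rowVal E e rr ≤ 0 := not_lt.1 hpos
          have hx0 : 0 ≤ rowVal E x rr := rowVal_nonneg E hx rr
          nlinarith
    by_cases hT1 : 1 ≤ t
    · -- in this case `x` is itself the constructed trek point
      have hge : ∀ rr, rowVal E e rr ≤ rowVal E x rr := by
        intro rr
        by_cases hpos : 0 < rowVal E e rr
        · have h1 : 1 * rowVal E e rr ≤ t * rowVal E e rr := by nlinarith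
          calc rowVal E e rr = 1 * rowVal E e rr := (one_mul _).symm
            _ ≤ t * rowVal E e rr := h1
            _ ≤ rowVal E x rr := hmain rr
        · exact le_trans (not_lt.1 hpos) (rowVal_nonneg E hx rr)
      have hz1 : ∀ l, e.1 l ≤ x.1 l := fun l => hge (Sum.inl l)
      have hsz : ∑ l, (x.1 l - e.1 l) = 0 := by
        rw [Finset.sum_sub_distrib, hx.2.2.2.1, heQ.2.2.2.1]
        ring
      have hzeq : ∀ l, x.1 l = e.1 l := by
        intro l
        have h0 : ∀ l ∈ (Finset.univ : Finset (Fin n)), 0 ≤ x.1 l - e.1 l := fun l _ => by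
          linarith [hz1 l]
        have := (Finset.sum_eq_zero_iff_of_nonneg h0).1 hsz l (Finset.mem_univ l)
        linarith
      have hyeq : ∀ l m, x.2 l m = e.2 l m := by
        by_contra hcon
        push_neg at hcon
        set F := Finset.univ.filter (fun l : Fin n => ∃ m, e.2 l m < x.2 l m) with hF
        have hFne : F.Nonempty := by
          obtain ⟨l, m, hlm⟩ := hcon
          have hy' : e.2 l m ≤ x.2 l m := hge (Sum.inr (Sum.inl (l, m)))
          exact ⟨l, Finset.mem_filter.2 ⟨Finset.mem_univ _,
            ⟨m, lt_of_le_of_ne hy' (Ne.symm hlm)⟩⟩⟩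
        obtain ⟨m0, hm0⟩ := (Finset.mem_filter.1 (F.min'_mem hFne)).2
        set l0 := F.min' hFne
        have hE0 : E l0 m0 := by
          by_contra hE0
          rw [hx.2.2.1 l0 m0 hE0, heQ.2.2.1 l0 m0 hE0] at hm0
          exact lt_irrefl 0 hm0
        have hrowe : eRow E e l0 m0 ≤ eRow E x l0 m0 := by
          have h' : (if E l0 m0 then eRow E e l0 m0 else 0) ≤
              (if E l0 m0 then eRow E x l0 m0 else 0) := hge (Sum.inr (Sum.inr (Sum.inl (l0, m0))))
          rwa [if_pos hE0, if_pos hE0] at h'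
        have hIN : INx E x l0 ≤ INx E e l0 := by
          unfold INx
          refine Finset.sum_le_sum ?_
          intro h hh
          have hEh : E h l0 := (Finset.mem_filter.1 hh).2
          by_contra hlt'
          push_neg at hlt'
          have hhF : h ∈ F := Finset.mem_filter.2 ⟨Finset.mem_univ _, ⟨l0, hlt'⟩⟩
          exact absurd (F.min'_le h hhF) (not_le.2 (hG.1 h l0 hEh))
        unfold eRow at hrowe
        have hz0 := hzeq l0
        exact absurd hm0 (not_lt.2 (by linarith))
      have hxe : x = e := Prod.ext (funext hzeq) (funext fun l => funext fun m => hyeq l m)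
      rw [hxe]
      exact heM
    · push_neg at hT1
      have ht1 : (0:ℝ) < 1 - t := by linarith
      set x' := (1 - t)⁻¹ • (x - t • e) with hx'
      have hrowx' : ∀ rr, rowVal E x' rr =
          (1 - t)⁻¹ * (rowVal E x rr - t * rowVal E e rr) := rowVal_comb E _ _ _ _
      have hx'nonneg : ∀ rr, 0 ≤ rowVal E x' rr := by
        intro rr
        rw [hrowx']
        have := hmain rr
        exact mul_nonneg (inv_nonneg.2 ht1.le) (by linarith)
      have hx'zero : ∀ rr, rowVal E x rr = 0 → rowVal E x' rr = 0 := by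
        intro rr h0
        rw [hrowx', h0, htight rr h0]
        ring
      have hx'Q : x' ∈ QPoly E := by
        refine mem_QPoly_of_rows E x' hx'nonneg ?_ ?_
        · intro l m hE
          have hx2 : x.2 l m = 0 := hx.2.2.1 l m hE
          have he2 : e.2 l m = 0 := heQ.2.2.1 l m hE
          show x'.2 l m = 0
          rw [hx', smul_sub_snd, hx2, he2]
          ring
        · show ∑ l, x'.1 l = 1
          rw [hx', sum_fst_comb, hx.2.2.2.1, heQ.2.2.2.1]
          field_simp
      have hsub : nontight E x' ⊆ nontight E x := by
        intro rr hrr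
        rw [nontight, Finset.mem_filter] at hrr ⊢
        exact ⟨hrr.1, fun h0 => hrr.2 (hx'zero rr h0)⟩
      have hr0notin : r0 ∉ nontight E x' := by
        rw [nontight, Finset.mem_filter]
        rintro ⟨-, hne⟩
        apply hne
        rw [hrowx']
        have hzero : rowVal E x r0 - t * rowVal E e r0 = 0 := by
          rw [← hr0t]
          rw [div_mul_cancel₀ _ hr0e.ne', sub_self]
        rw [hzero, mul_zero]
      have hss : nontight E x' ⊂ nontight E x :=
        ⟨hsub, fun hsup => hr0notin (hsup hr0nt)⟩
      have hcard' : (nontight E x').card ≤ N := by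
        have := Finset.card_lt_card hss
        omega
      have hx'M := IH x' hx'Q hcard'
      have hcomb : x = t • e + (1 - t) • x' := by
        calc x = t • e + (x - t • e) := by abel
          _ = t • e + (1 - t) • x' := by
            rw [hx', smul_smul, mul_inv_cancel₀ (ne_of_gt ht1), one_smul]
      rw [hcomb]
      exact convex_convexHull ℝ _ heM hx'M htpos.le (by linarith) (by ring)

/-- For a polytree, the third-order moment polytope is exactly the
solution set of the displayed equations and inequalities. -/
theorem moment_polytope_eq (n : ℕ) (E : Fin n → Fin n → Prop) [DecidableRel E]
    (hG : IsPolytree E) : momentPolytope E = QPoly E := by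
  apply Set.Subset.antisymm
  · exact momentPolytope_subset_QPoly hG
  · intro x hx
    exact QPoly_subset_aux E hG (nontight E x).card x hx le_rfl

end LNG
end

section
/- Let G=(V,E) be a polytree and let (z,y)∈ℝ^{|V|+|E|} satisfy: z_l ≥ 0 for all l∈V; y_{lm} > 0 for all (l,m)∈E; Σ_{l∈V} z_l = 1; 2z_l + Σ_{h∈pa(l)} y_{hl} − y_{lm} ≥ 0 for every edge (l,m)∈E; and 3z_l + Σ_{h∈pa(l)} y_{hl} − Σ_{m∈ch(l)} y_{lm} ≥ 0 for every l∈V. Then for each vertex l there is at most one child m∈ch(l) for which the equality 2z_l + Σ_{h∈pa(l)} y_{hl} − y_{lm} = 0 holds (i.e., at most one outgoing "marked" edge). -/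
open MvPolynomial Matrix Finset

namespace LNG

variable {n : ℕ}

/-- Claim 1. If `(z,y)` satisfies the defining inequalities of `Q_G`
with all edge coordinates strictly positive, then every vertex has at most one outgoing
marked edge. -/
theorem at_most_one_marked_edge (n : ℕ) (E : Fin n → Fin n → Prop) [DecidableRel E]
    (hG : IsPolytree E) (z : Fin n → ℝ) (y : Fin n → Fin n → ℝ)
    (hz : ∀ l, 0 ≤ z l)
    (hy : ∀ l m, E l m → 0 < y l m)
    (hsum : (∑ l, z l) = 1)
    (h4 : ∀ l m, E l m →
      0 ≤ 2 * z l + (∑ h ∈ Finset.univ.filter (fun h => E h l), y h l) - y l m)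
    (h5 : ∀ l, 0 ≤ 3 * z l + (∑ h ∈ Finset.univ.filter (fun h => E h l), y h l)
      - ∑ m ∈ Finset.univ.filter (fun m => E l m), y l m)
    (l m m' : Fin n) (hm : E l m) (hm' : E l m')
    (heq : 2 * z l + (∑ h ∈ Finset.univ.filter (fun h => E h l), y h l) - y l m = 0)
    (heq' : 2 * z l + (∑ h ∈ Finset.univ.filter (fun h => E h l), y h l) - y l m' = 0) :
    m = m' := by
  by_contra hne
  set S := ∑ h ∈ Finset.univ.filter (fun h => E h l), y h l with hS
  have hSnn : 0 ≤ S := Finset.sum_nonneg fun h hh => le_of_lt (hy h l (by simpa using hh))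
  have hpair : y l m + y l m' ≤ ∑ m ∈ Finset.univ.filter (fun m => E l m), y l m := by
    rw [← Finset.sum_pair hne]
    refine Finset.sum_le_sum_of_subset_of_nonneg ?_ ?_
    · intro x hx
      simp only [Finset.mem_insert, Finset.mem_singleton] at hx
      rcases hx with rfl | rfl <;> simp [hm, hm']
    · intro x hx _
      exact le_of_lt (hy l x (by simpa using hx))
  have := h5 l
  have := hy l m hm
  have := hz l
  linarith

end LNG
end

section
/- Let G=(V,E) be a polytree. The polyhedron Q_G ⊆ ℝ^{|V|+|E|} defined by z_l ≥ 0 for all l∈V, y_{lm} ≥ 0 for all (l,m)∈E, Σ_{l∈V} z_l = 1, 2z_l + Σ_{h∈pa(l)} y_{hl} − y_{lm} ≥ 0 for every edge (l,m)∈E, and 3z_l + Σ_{h∈pa(l)} y_{hl} − Σ_{m∈ch(l)} y_{lm} ≥ 0 for every l∈V, is a bounded subset of ℝ^{|V|+|E|}. -/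
open MvPolynomial Matrix Finset

namespace LNG

variable {n : ℕ}

/-- For a polytree, the polyhedron `Q_G` is bounded. -/
theorem QPoly_bounded (n : ℕ) (E : Fin n → Fin n → Prop) [DecidableRel E]
    (hG : IsPolytree E) : Bornology.IsBounded (QPoly E) := by
  obtain ⟨hlt, -⟩ := hG
  rw [isBounded_iff_forall_norm_le]
  set A : ℝ := 2 * n + 2 with hA
  have hA1 : (1:ℝ) ≤ A := by
    have : (0:ℝ) ≤ (n:ℝ) := Nat.cast_nonneg n
    simp only [hA]; linarith
  have hCpos : (0:ℝ) ≤ A ^ n := by positivity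
  refine ⟨A ^ n, ?_⟩
  rintro ⟨z, y⟩ ⟨hz, hy, hy0, hsum, hedge, -⟩
  have hz1 : ∀ l, z l ≤ 1 := by
    intro l
    rw [← hsum]
    exact Finset.single_le_sum (fun i _ => hz i) (Finset.mem_univ l)
  have hynn : ∀ l m, 0 ≤ y l m := by
    intro l m
    by_cases hE : E l m
    · exact hy l m hE
    · exact (hy0 l m hE).ge
  have key : ∀ k : ℕ, ∀ l : Fin n, (l:ℕ) < k → ∀ m, y l m ≤ A ^ k := by
    intro k
    induction k using Nat.strong_induction_on with
    | _ k ih =>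
      intro l hl m
      by_cases hE : E l m
      · have h1 := hedge l m hE
        have hb : ∀ h ∈ Finset.univ.filter (fun h => E h l), y h l ≤ A ^ (l:ℕ) := by
          intro h hh
          simp only [Finset.mem_filter] at hh
          have hhl : (h:ℕ) < (l:ℕ) := hlt h l hh.2
          exact ih (l:ℕ) hl h hhl l
        have hsum_le : (∑ h ∈ Finset.univ.filter (fun h => E h l), y h l)
            ≤ (n:ℝ) * A ^ (l:ℕ) := by
          calc (∑ h ∈ Finset.univ.filter (fun h => E h l), y h l)
              ≤ (Finset.univ.filter (fun h => E h l)).card • (A ^ (l:ℕ)) :=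
                Finset.sum_le_card_nsmul _ _ _ hb
            _ = ((Finset.univ.filter (fun h => E h l)).card : ℝ) * A ^ (l:ℕ) := by
                rw [nsmul_eq_mul]
            _ ≤ (n:ℝ) * A ^ (l:ℕ) := by
                apply mul_le_mul_of_nonneg_right _ (by positivity)
                exact_mod_cast (Finset.card_filter_le _ _).trans
                  (le_of_eq (Finset.card_univ.trans (Fintype.card_fin n)))
        have hpow1 : (1:ℝ) ≤ A ^ (l:ℕ) := by simpa using pow_le_pow_right₀ hA1 (Nat.zero_le (l:ℕ))
        have hstep : y l m ≤ A ^ ((l:ℕ) + 1) := by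
          have : y l m ≤ 2 * z l + (∑ h ∈ Finset.univ.filter (fun h => E h l), y h l) := by
            linarith
          have h2 : y l m ≤ 2 + (n:ℝ) * A ^ (l:ℕ) := by
            have := hz1 l
            linarith
          have h3 : (2:ℝ) + (n:ℝ) * A ^ (l:ℕ) ≤ A ^ ((l:ℕ) + 1) := by
            rw [pow_succ, hA]
            have hn : (0:ℝ) ≤ (n:ℝ) := Nat.cast_nonneg n
            nlinarith [hpow1]
          linarith
        calc y l m ≤ A ^ ((l:ℕ) + 1) := hstep
          _ ≤ A ^ k := pow_le_pow_right₀ hA1 hl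
      · exact le_trans (le_of_eq (hy0 l m hE)) (by positivity)
  have hybound : ∀ l m, y l m ≤ A ^ n := fun l m => key n l l.isLt m
  rw [Prod.norm_def]
  apply max_le
  · rw [pi_norm_le_iff_of_nonneg hCpos]
    intro l
    rw [Real.norm_eq_abs, abs_le]
    constructor
    · linarith [hz l]
    · exact (hz1 l).trans (by simpa using pow_le_pow_right₀ hA1 (Nat.zero_le n))
  · rw [pi_norm_le_iff_of_nonneg hCpos]
    intro l
    rw [pi_norm_le_iff_of_nonneg hCpos]
    intro m
    rw [Real.norm_eq_abs, abs_le]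
    exact ⟨by linarith [hynn l m], hybound l m⟩

end LNG
end

section
/- If the DAG G is the disjoint union of two subgraphs G₁ and G₂ (no edges between them), then the third-order moment ideal decomposes as I^{≤3}(G) = I^{≤3}(G₁) + I^{≤3}(G₂) + ⟨ s_{ij}, t_{ikj} : i∈V(G₁), j∈V(G₂), k∈V ⟩, i.e., it is the sum of the ideals of the two components together with the ideal generated by all covariance and third-moment variables whose indices meet both components. -/
open MvPolynomial Matrix Finset

namespace LNG

variable {n : ℕ}

/-- The set of variables all of whose indices lie in `A`. -/
def varsIn (A : Set (Fin n)) : Set (MomVar n) :=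
  {v | match v with
    | Sum.inl p => p.1.1 ∈ A ∧ p.1.2 ∈ A
    | Sum.inr p => p.1.1 ∈ A ∧ p.1.2.1 ∈ A ∧ p.1.2.2 ∈ A}

/-! ### Auxiliary material for Statement 15 -/

section MatrixAux

/-- Truncated Neumann series for `(1 - Λ)⁻¹`. -/
noncomputable def Minv (Λ : Matrix (Fin n) (Fin n) ℝ) : Matrix (Fin n) (Fin n) ℝ :=
  ∑ k ∈ Finset.range n, Λ ^ k

/-- Strictly (topologically) upper triangular matrices. -/
def StrictUpper (Λ : Matrix (Fin n) (Fin n) ℝ) : Prop := ∀ i j, Λ i j ≠ 0 → i < j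

lemma strictUpper_of_supported {E : Fin n → Fin n → Prop} (hE : ∀ i j, E i j → i < j)
    {Λ : Matrix (Fin n) (Fin n) ℝ} (hsup : Supported E Λ) : StrictUpper Λ := by
  intro i j hne
  by_contra hlt
  refine hne (hsup i j ?_)
  intro hEij
  exact hlt (hE i j hEij)

lemma pow_apply_eq_zero {Λ : Matrix (Fin n) (Fin n) ℝ} (h : StrictUpper Λ) :
    ∀ (k : ℕ) (i j : Fin n), (j : ℕ) < (i : ℕ) + k → (Λ ^ k) i j = 0 := by
  intro k
  induction k with
  | zero =>
    intro i j hij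
    have hne : i ≠ j := by
      intro hc; subst hc; omega
    simp [Matrix.one_apply_ne hne]
  | succ k ih =>
    intro i j hij
    rw [pow_succ, Matrix.mul_apply]
    apply Finset.sum_eq_zero
    intro m _
    by_cases hm : Λ m j = 0
    · rw [hm, mul_zero]
    · have hmj : m < j := h m j hm
      have hm2 : (m : ℕ) < (i : ℕ) + k := by
        have := (Fin.lt_def.mp hmj); omega
      rw [ih i m hm2, zero_mul]

lemma one_sub_inv {Λ : Matrix (Fin n) (Fin n) ℝ} (h : StrictUpper Λ) :
    (1 - Λ)⁻¹ = Minv Λ := by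
  apply Matrix.inv_eq_left_inv
  have hn : Λ ^ n = 0 := by
    ext i j
    simp [pow_apply_eq_zero h n i j (by omega)]
  have hg := geom_sum_mul Λ n
  rw [hn] at hg
  have key : Minv Λ * (1 - Λ) = -(0 - 1) := by
    rw [← hg, Minv, ← neg_sub Λ (1 : Matrix (Fin n) (Fin n) ℝ), mul_neg]
  rw [key]
  simp

lemma momentS_apply {Λ : Matrix (Fin n) (Fin n) ℝ} (h : StrictUpper Λ) (ω : Fin n → ℝ)
    (i j : Fin n) : momentS Λ ω i j = ∑ a, ω a * Minv Λ a i * Minv Λ a j := by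
  rw [momentS, one_sub_inv h, Matrix.mul_apply]
  refine Finset.sum_congr rfl fun a _ => ?_
  rw [Matrix.mul_diagonal, Matrix.transpose_apply]
  ring

lemma momentT_apply {Λ : Matrix (Fin n) (Fin n) ℝ} (h : StrictUpper Λ) (ω : Fin n → ℝ)
    (i j k : Fin n) : momentT Λ ω i j k = ∑ a, ω a * Minv Λ a i * Minv Λ a j * Minv Λ a k := by
  rw [momentT, one_sub_inv h]

/-- A matrix that is block diagonal with respect to the partition `B, Bᶜ`. -/
def IsBlockM (B : Set (Fin n)) (M : Matrix (Fin n) (Fin n) ℝ) : Prop :=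
  ∀ i j, ¬ ((i ∈ B) ↔ (j ∈ B)) → M i j = 0

lemma isBlockM_one {B : Set (Fin n)} : IsBlockM B (1 : Matrix (Fin n) (Fin n) ℝ) := by
  intro i j hij
  have hne : i ≠ j := fun hc => hij (by rw [hc])
  simp [Matrix.one_apply_ne hne]

lemma isBlockM_mul {B : Set (Fin n)} {M N : Matrix (Fin n) (Fin n) ℝ}
    (hM : IsBlockM B M) (hN : IsBlockM B N) : IsBlockM B (M * N) := by
  intro i j hij
  rw [Matrix.mul_apply]
  apply Finset.sum_eq_zero
  intro m _
  by_cases h1 : (i ∈ B) ↔ (m ∈ B)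
  · rw [hN m j (by tauto), mul_zero]
  · rw [hM i m h1, zero_mul]

lemma isBlockM_pow {B : Set (Fin n)} {M : Matrix (Fin n) (Fin n) ℝ}
    (hM : IsBlockM B M) : ∀ k : ℕ, IsBlockM B (M ^ k) := by
  intro k
  induction k with
  | zero => simpa [pow_zero] using (isBlockM_one (B := B))
  | succ k ih => rw [pow_succ]; exact isBlockM_mul ih hM

lemma isBlockM_minv {B : Set (Fin n)} {M : Matrix (Fin n) (Fin n) ℝ}
    (hM : IsBlockM B M) : IsBlockM B (Minv M) := by
  intro i j hij
  rw [Minv, Matrix.sum_apply]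
  exact Finset.sum_eq_zero fun k _ => isBlockM_pow hM k i j hij

lemma pow_entry_congr {B : Set (Fin n)} {Λ Λ' : Matrix (Fin n) (Fin n) ℝ}
    (hb' : IsBlockM B Λ') (hagree : ∀ m i, i ∈ B → Λ m i = Λ' m i) :
    ∀ (k : ℕ) (a i : Fin n), i ∈ B → (Λ ^ k) a i = (Λ' ^ k) a i := by
  intro k
  induction k with
  | zero => intro a i _; rfl
  | succ k ih =>
    intro a i hi
    rw [pow_succ, pow_succ, Matrix.mul_apply, Matrix.mul_apply]
    refine Finset.sum_congr rfl fun m _ => ?_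
    rw [hagree m i hi]
    by_cases hm : Λ' m i = 0
    · rw [hm, mul_zero, mul_zero]
    · have hmB : m ∈ B := by
        by_contra hmn
        exact hm (hb' m i fun hiff => hmn (hiff.mpr hi))
      rw [ih a m hmB]

lemma minv_entry_congr {B : Set (Fin n)} {Λ Λ' : Matrix (Fin n) (Fin n) ℝ}
    (hb' : IsBlockM B Λ') (hagree : ∀ m i, i ∈ B → Λ m i = Λ' m i)
    {i : Fin n} (hi : i ∈ B) (a : Fin n) : Minv Λ a i = Minv Λ' a i := by
  rw [Minv, Minv, Matrix.sum_apply, Matrix.sum_apply]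
  exact Finset.sum_congr rfl fun k _ => pow_entry_congr hb' hagree k a i hi

lemma momentS_congr {B : Set (Fin n)} {Λ Λ' : Matrix (Fin n) (Fin n) ℝ} {ω ω' : Fin n → ℝ}
    (hup : StrictUpper Λ) (hup' : StrictUpper Λ') (hb' : IsBlockM B Λ')
    (hagree : ∀ m i, i ∈ B → Λ m i = Λ' m i) (hω : ∀ a ∈ B, ω a = ω' a)
    {i j : Fin n} (hi : i ∈ B) (hj : j ∈ B) : momentS Λ ω i j = momentS Λ' ω' i j := by
  rw [momentS_apply hup, momentS_apply hup']
  refine Finset.sum_congr rfl fun a _ => ?_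
  rw [minv_entry_congr hb' hagree hi a, minv_entry_congr hb' hagree hj a]
  by_cases ha : a ∈ B
  · rw [hω a ha]
  · rw [isBlockM_minv hb' a i fun hiff => ha (hiff.mpr hi)]
    ring

lemma momentT_congr {B : Set (Fin n)} {Λ Λ' : Matrix (Fin n) (Fin n) ℝ} {ω ω' : Fin n → ℝ}
    (hup : StrictUpper Λ) (hup' : StrictUpper Λ') (hb' : IsBlockM B Λ')
    (hagree : ∀ m i, i ∈ B → Λ m i = Λ' m i) (hω : ∀ a ∈ B, ω a = ω' a)
    {i j k : Fin n} (hi : i ∈ B) (hj : j ∈ B) (hk : k ∈ B) :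
    momentT Λ ω i j k = momentT Λ' ω' i j k := by
  rw [momentT_apply hup, momentT_apply hup']
  refine Finset.sum_congr rfl fun a _ => ?_
  rw [minv_entry_congr hb' hagree hi a, minv_entry_congr hb' hagree hj a,
    minv_entry_congr hb' hagree hk a]
  by_cases ha : a ∈ B
  · rw [hω a ha]
  · rw [isBlockM_minv hb' a i fun hiff => ha (hiff.mpr hi)]
    ring

lemma momentS_mixed_zero {B : Set (Fin n)} {Λ : Matrix (Fin n) (Fin n) ℝ} {ω : Fin n → ℝ}
    (hup : StrictUpper Λ) (hb : IsBlockM B Λ) {i j : Fin n}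
    (hij : ¬ ((i ∈ B) ↔ (j ∈ B))) : momentS Λ ω i j = 0 := by
  rw [momentS_apply hup]
  apply Finset.sum_eq_zero
  intro a _
  have hminv := isBlockM_minv hb
  by_cases ha : (a ∈ B) ↔ (i ∈ B)
  · rw [hminv a j (by tauto)]; ring
  · rw [hminv a i ha]; ring

lemma momentT_mixed_zero {B : Set (Fin n)} {Λ : Matrix (Fin n) (Fin n) ℝ} {ω : Fin n → ℝ}
    (hup : StrictUpper Λ) (hb : IsBlockM B Λ) {i j k : Fin n}
    (hijk : ¬ ((i ∈ B) ↔ (j ∈ B)) ∨ ¬ ((i ∈ B) ↔ (k ∈ B)) ∨ ¬ ((j ∈ B) ↔ (k ∈ B))) :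
    momentT Λ ω i j k = 0 := by
  rw [momentT_apply hup]
  apply Finset.sum_eq_zero
  intro a _
  have hminv := isBlockM_minv hb
  by_cases hai : (a ∈ B) ↔ (i ∈ B)
  · by_cases haj : (a ∈ B) ↔ (j ∈ B)
    · rw [hminv a k (by tauto)]; ring
    · rw [hminv a j haj]; ring
  · rw [hminv a i hai]; ring

end MatrixAux

section VarAux

lemma svar_eq {i j p q : Fin n} (hpq : p ≤ q) (hmin : min i j = p) (hmax : max i j = q) :
    svar i j = X (Sum.inl ⟨(p, q), hpq⟩) := by
  subst hmin hmax; rfl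

lemma tvar_eq {i j k p q r : Fin n} (h1 : p ≤ q) (h2 : q ≤ r)
    (hmin : min i (min j k) = p) (hmid : mid3 i j k = q) (hmax : max i (max j k) = r) :
    tvar i j k = X (Sum.inr ⟨(p, q, r), h1, h2⟩) := by
  subst hmin hmid hmax; rfl

variable {p q r : Fin n}

lemma svar_pq (h : p ≤ q) : svar p q = X (Sum.inl ⟨(p, q), h⟩) :=
  svar_eq h (min_eq_left h) (max_eq_right h)

lemma svar_qp (h : p ≤ q) : svar q p = X (Sum.inl ⟨(p, q), h⟩) :=
  svar_eq h (min_eq_right h) (max_eq_left h)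

lemma tvar_pqr (h1 : p ≤ q) (h2 : q ≤ r) : tvar p q r = X (Sum.inr ⟨(p, q, r), h1, h2⟩) :=
  tvar_eq h1 h2
    (by rw [min_eq_left h2, min_eq_left h1])
    (by simp only [mid3]; rw [min_eq_left h1, max_eq_right h1, min_eq_left h2, max_eq_right h1])
    (by rw [max_eq_right h2, max_eq_right (h1.trans h2)])

lemma tvar_prq (h1 : p ≤ q) (h2 : q ≤ r) : tvar p r q = X (Sum.inr ⟨(p, q, r), h1, h2⟩) :=
  tvar_eq h1 h2
    (by rw [min_eq_right h2, min_eq_left h1])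
    (by simp only [mid3]
        rw [min_eq_left (h1.trans h2), max_eq_right (h1.trans h2), min_eq_right h2,
          max_eq_right h1])
    (by rw [max_eq_left h2, max_eq_right (h1.trans h2)])

lemma tvar_qpr (h1 : p ≤ q) (h2 : q ≤ r) : tvar q p r = X (Sum.inr ⟨(p, q, r), h1, h2⟩) :=
  tvar_eq h1 h2
    (by rw [min_eq_left (h1.trans h2), min_eq_right h1])
    (by simp only [mid3]; rw [min_eq_right h1, max_eq_left h1, min_eq_left h2, max_eq_right h1])
    (by rw [max_eq_right (h1.trans h2), max_eq_right h2])

lemma tvar_qrp (h1 : p ≤ q) (h2 : q ≤ r) : tvar q r p = X (Sum.inr ⟨(p, q, r), h1, h2⟩) :=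
  tvar_eq h1 h2
    (by rw [min_eq_right (h1.trans h2), min_eq_right h1])
    (by simp only [mid3]
        rw [min_eq_left h2, max_eq_right h2, min_eq_right (h1.trans h2), max_eq_left h1])
    (by rw [max_eq_left (h1.trans h2), max_eq_right h2])

lemma tvar_rpq (h1 : p ≤ q) (h2 : q ≤ r) : tvar r p q = X (Sum.inr ⟨(p, q, r), h1, h2⟩) :=
  tvar_eq h1 h2
    (by rw [min_eq_left h1, min_eq_right (h1.trans h2)])
    (by simp only [mid3]
        rw [min_eq_right (h1.trans h2), max_eq_left (h1.trans h2), min_eq_right h2,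
          max_eq_right h1])
    (by rw [max_eq_right h1, max_eq_left h2])

lemma tvar_rqp (h1 : p ≤ q) (h2 : q ≤ r) : tvar r q p = X (Sum.inr ⟨(p, q, r), h1, h2⟩) :=
  tvar_eq h1 h2
    (by rw [min_eq_right h1, min_eq_right (h1.trans h2)])
    (by simp only [mid3]
        rw [min_eq_right h2, max_eq_left h2, min_eq_right (h1.trans h2), max_eq_left h1])
    (by rw [max_eq_left h1, max_eq_left h2])

/-- Evaluation only depends on the values at the supporting variables. -/
lemma eval_congr_of_supported {s : Set (MomVar n)} {f : MvPolynomial (MomVar n) ℝ}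
    (hf : f ∈ supported ℝ s) {g1 g2 : MomVar n → ℝ} (h : ∀ v ∈ s, g1 v = g2 v) :
    eval g1 f = eval g2 f := by
  rw [mem_supported] at hf
  show eval₂ (RingHom.id ℝ) g1 f = eval₂ (RingHom.id ℝ) g2 f
  refine eval₂_congr _ g1 g2 ?_
  intro i c hic hc
  exact h i (hf (MvPolynomial.mem_vars i |>.mpr ⟨c, MvPolynomial.mem_support_iff.mpr hc, hic⟩))

lemma mem_momentIdeal_iff {E : Fin n → Fin n → Prop} {f : MvPolynomial (MomVar n) ℝ} :
    f ∈ momentIdeal E ↔ ∀ S T, MomentModel E S T → eval (evalVar S T) f = 0 :=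
  Iff.rfl

end VarAux

section ModelAux

variable {E : Fin n → Fin n → Prop}

/-- Restriction of a model of `G` to the induced subgraph on `B`. -/
lemma model_restrict (hE : ∀ i j, E i j → i < j) {B : Set (Fin n)}
    (hB : ∀ i j, E i j → (i ∈ B ↔ j ∈ B))
    {S : Matrix (Fin n) (Fin n) ℝ} {T : Fin n → Fin n → Fin n → ℝ}
    (h : MomentModel E S T) :
    ∃ S' T', MomentModel (fun i j => E i j ∧ i ∈ B ∧ j ∈ B) S' T' ∧
      ∀ v ∈ varsIn B, evalVar S T v = evalVar S' T' v := by
  classical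
  obtain ⟨Λ, ω2, ω3, hsup, hpos, hS, hT⟩ := h
  subst hS hT
  have hupper : StrictUpper Λ := strictUpper_of_supported hE hsup
  set Λ' : Matrix (Fin n) (Fin n) ℝ :=
    Matrix.of (fun i j => if i ∈ B ∧ j ∈ B then Λ i j else 0) with hΛ'
  have hΛ'app : ∀ i j, Λ' i j = if i ∈ B ∧ j ∈ B then Λ i j else 0 := fun i j => rfl
  have hsup' : Supported (fun i j => E i j ∧ i ∈ B ∧ j ∈ B) Λ' := by
    intro i j hn
    rw [hΛ'app]
    by_cases hm : i ∈ B ∧ j ∈ B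
    · have hne : ¬ E i j := fun he => hn ⟨he, hm⟩
      simp [hm, hsup i j hne]
    · simp [hm]
  have hupper' : StrictUpper Λ' := by
    intro i j hne
    rw [hΛ'app] at hne
    by_cases hm : i ∈ B ∧ j ∈ B
    · exact hupper i j (by simpa [hm] using hne)
    · simp [hm] at hne
  have hblock' : IsBlockM B Λ' := by
    intro i j hij
    have hm : ¬ (i ∈ B ∧ j ∈ B) := fun hm => hij (iff_of_true hm.1 hm.2)
    rw [hΛ'app]; simp [hm]
  have hagree : ∀ m i, i ∈ B → Λ m i = Λ' m i := by
    intro m i hi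
    rw [hΛ'app]
    by_cases hm : m ∈ B
    · simp [hm, hi]
    · have h0 : Λ m i = 0 := by
        by_contra hne
        have hEm : E m i := by
          by_contra hEn
          exact hne (hsup m i hEn)
        exact hm ((hB m i hEm).mpr hi)
      simp [hm, h0]
  refine ⟨momentS Λ' ω2, momentT Λ' ω3, ⟨Λ', ω2, ω3, hsup', hpos, rfl, rfl⟩, ?_⟩
  intro v hv
  rcases v with ⟨⟨a, b⟩, hab⟩ | ⟨⟨a, b, c⟩, habc⟩
  · obtain ⟨ha, hb⟩ := hv
    exact momentS_congr hupper hupper' hblock' hagree (fun _ _ => rfl) ha hb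
  · obtain ⟨ha, hb, hc⟩ := hv
    exact momentT_congr hupper hupper' hblock' hagree (fun _ _ => rfl) ha hb hc

/-- Blending a model of `G₁` and a model of `G₂` into a model of `G`. -/
lemma model_blend (hE : ∀ i j, E i j → i < j) {A : Set (Fin n)}
    (hsplit : ∀ i j, E i j → (i ∈ A ↔ j ∈ A))
    {S1 T1 S2 T2}
    (h1 : MomentModel (fun i j => E i j ∧ i ∈ A ∧ j ∈ A) S1 T1)
    (h2 : MomentModel (fun i j => E i j ∧ i ∉ A ∧ j ∉ A) S2 T2) :
    ∃ S T, MomentModel E S T ∧ (∀ v ∈ varsIn A, evalVar S T v = evalVar S1 T1 v) ∧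
      (∀ v ∈ varsIn Aᶜ, evalVar S T v = evalVar S2 T2 v) := by
  classical
  obtain ⟨Λ1, a2, a3, hsup1, hpos1, hS1, hT1⟩ := h1
  obtain ⟨Λ2, b2, b3, hsup2, hpos2, hS2, hT2⟩ := h2
  subst hS1 hT1 hS2 hT2
  have hup1 : StrictUpper Λ1 :=
    strictUpper_of_supported (fun i j hij => hE i j hij.1) hsup1
  have hup2 : StrictUpper Λ2 :=
    strictUpper_of_supported (fun i j hij => hE i j hij.1) hsup2
  set Λ : Matrix (Fin n) (Fin n) ℝ :=
    Matrix.of (fun i j => if i ∈ A then Λ1 i j else Λ2 i j) with hΛ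
  have hΛapp : ∀ i j, Λ i j = if i ∈ A then Λ1 i j else Λ2 i j := fun i j => rfl
  set ω2 : Fin n → ℝ := fun i => if i ∈ A then a2 i else b2 i with hω2
  set ω3 : Fin n → ℝ := fun i => if i ∈ A then a3 i else b3 i with hω3
  have hsupE : Supported E Λ := by
    intro i j hn
    rw [hΛapp]
    have h01 : Λ1 i j = 0 := hsup1 i j fun hc => hn hc.1
    have h02 : Λ2 i j = 0 := hsup2 i j fun hc => hn hc.1
    by_cases hi : i ∈ A <;> simp [hi, h01, h02]
  have hupper : StrictUpper Λ := by
    intro i j hne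
    rw [hΛapp] at hne
    by_cases hi : i ∈ A
    · exact hup1 i j (by simpa [hi] using hne)
    · exact hup2 i j (by simpa [hi] using hne)
  have hblock1 : IsBlockM A Λ1 := by
    intro i j hij
    by_contra hne
    have := hsup1 i j
    have hPij : E i j ∧ i ∈ A ∧ j ∈ A := by
      by_contra hc
      exact hne (hsup1 i j hc)
    exact hij (iff_of_true hPij.2.1 hPij.2.2)
  have hblock2 : IsBlockM Aᶜ Λ2 := by
    intro i j hij
    by_contra hne
    have hQij : E i j ∧ i ∉ A ∧ j ∉ A := by
      by_contra hc
      exact hne (hsup2 i j hc)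
    exact hij (iff_of_true hQij.2.1 hQij.2.2)
  have hagreeA : ∀ m i, i ∈ A → Λ m i = Λ1 m i := by
    intro m i hi
    rw [hΛapp]
    by_cases hm : m ∈ A
    · simp [hm]
    · have h02 : Λ2 m i = 0 := hsup2 m i fun hc => hc.2.2 hi
      have h01 : Λ1 m i = 0 := hsup1 m i fun hc => hm hc.2.1
      simp [hm, h01, h02]
  have hagreeB : ∀ m i, i ∈ Aᶜ → Λ m i = Λ2 m i := by
    intro m i hi
    rw [hΛapp]
    by_cases hm : m ∈ A
    · have h01 : Λ1 m i = 0 := hsup1 m i fun hc => hi hc.2.2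
      have h02 : Λ2 m i = 0 := hsup2 m i fun hc => hc.2.1 hm
      simp [hm, h01, h02]
    · simp [hm]
  have hωA2 : ∀ a ∈ A, ω2 a = a2 a := fun a ha => by simp [hω2, ha]
  have hωA3 : ∀ a ∈ A, ω3 a = a3 a := fun a ha => by simp [hω3, ha]
  have hωB2 : ∀ a ∈ Aᶜ, ω2 a = b2 a := fun a ha => by simp [hω2, (Set.mem_compl_iff A a).mp ha]
  have hωB3 : ∀ a ∈ Aᶜ, ω3 a = b3 a := fun a ha => by simp [hω3, (Set.mem_compl_iff A a).mp ha]
  refine ⟨momentS Λ ω2, momentT Λ ω3,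
    ⟨Λ, ω2, ω3, hsupE, ?_, rfl, rfl⟩, ?_, ?_⟩
  · intro i
    by_cases hi : i ∈ A <;> simp [hω2, hi, hpos1 i, hpos2 i]
  · intro v hv
    rcases v with ⟨⟨a, b⟩, hab⟩ | ⟨⟨a, b, c⟩, habc⟩
    · obtain ⟨ha, hb⟩ := hv
      exact momentS_congr hupper hup1 hblock1 hagreeA hωA2 ha hb
    · obtain ⟨ha, hb, hc⟩ := hv
      exact momentT_congr hupper hup1 hblock1 hagreeA hωA3 ha hb hc
  · intro v hv
    rcases v with ⟨⟨a, b⟩, hab⟩ | ⟨⟨a, b, c⟩, habc⟩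
    · obtain ⟨ha, hb⟩ := hv
      exact momentS_congr hupper hup2 hblock2 hagreeB hωB2 ha hb
    · obtain ⟨ha, hb, hc⟩ := hv
      exact momentT_congr hupper hup2 hblock2 hagreeB hωB3 ha hb hc

/-- In a model of a disconnected graph, mixed covariances vanish. -/
lemma model_S_mixed (hE : ∀ i j, E i j → i < j) {A : Set (Fin n)}
    (hsplit : ∀ i j, E i j → (i ∈ A ↔ j ∈ A))
    {S : Matrix (Fin n) (Fin n) ℝ} {T : Fin n → Fin n → Fin n → ℝ}
    (h : MomentModel E S T) :
    (∀ a b, ¬ ((a ∈ A) ↔ (b ∈ A)) → S a b = 0) ∧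
    (∀ a b c, (¬ ((a ∈ A) ↔ (b ∈ A)) ∨ ¬ ((a ∈ A) ↔ (c ∈ A)) ∨ ¬ ((b ∈ A) ↔ (c ∈ A))) →
      T a b c = 0) := by
  obtain ⟨Λ, ω2, ω3, hsup, hpos, hS, hT⟩ := h
  subst hS hT
  have hupper : StrictUpper Λ := strictUpper_of_supported hE hsup
  have hblock : IsBlockM A Λ := by
    intro i j hij
    by_contra hne
    have hEij : E i j := by
      by_contra hc
      exact hne (hsup i j hc)
    exact hij (hsplit i j hEij)
  exact ⟨fun a b hab => momentS_mixed_zero hupper hblock hab,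
    fun a b c habc => momentT_mixed_zero hupper hblock habc⟩

lemma eval_svar_zero {A : Set (Fin n)} {S : Matrix (Fin n) (Fin n) ℝ}
    {T : Fin n → Fin n → Fin n → ℝ}
    (hS : ∀ a b, ¬ ((a ∈ A) ↔ (b ∈ A)) → S a b = 0)
    {i j : Fin n} (hi : i ∈ A) (hj : j ∉ A) :
    eval (evalVar S T) (svar i j) = 0 := by
  rcases le_total i j with h | h
  · rw [svar_pq h, eval_X]
    exact hS i j (by tauto)
  · rw [svar_qp h, eval_X]
    exact hS j i (by tauto)

lemma eval_tvar_zero {A : Set (Fin n)} {S : Matrix (Fin n) (Fin n) ℝ}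
    {T : Fin n → Fin n → Fin n → ℝ}
    (hT : ∀ a b c, (¬ ((a ∈ A) ↔ (b ∈ A)) ∨ ¬ ((a ∈ A) ↔ (c ∈ A)) ∨ ¬ ((b ∈ A) ↔ (c ∈ A))) →
      T a b c = 0)
    {i j : Fin n} (hi : i ∈ A) (hj : j ∉ A) (k : Fin n) :
    eval (evalVar S T) (tvar i k j) = 0 := by
  rcases le_total i k with hik | hki
  · rcases le_total k j with hkj | hjk
    · rw [tvar_pqr hik hkj, eval_X]
      exact hT i k j (by tauto)
    · rcases le_total i j with hij | hji
      · rw [tvar_prq hij hjk, eval_X]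
        exact hT i j k (by tauto)
      · rw [tvar_qrp hji hik, eval_X]
        exact hT j i k (by tauto)
  · rcases le_total i j with hij | hji
    · rw [tvar_qpr hki hij, eval_X]
      exact hT k i j (by tauto)
    · rcases le_total k j with hkj | hjk
      · rw [tvar_rpq hkj hji, eval_X]
        exact hT k j i (by tauto)
      · rw [tvar_rqp hjk hki, eval_X]
        exact hT j k i (by tauto)

/-- Every "mixed" variable lies in the third ideal. -/
lemma mixed_var_mem {A : Set (Fin n)} (v : MomVar n)
    (h1 : v ∉ varsIn A) (h2 : v ∉ varsIn Aᶜ) :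
    X v ∈ Ideal.span {f : MvPolynomial (MomVar n) ℝ |
      ∃ i j, i ∈ A ∧ j ∉ A ∧ (f = svar i j ∨ ∃ k, f = tvar i k j)} := by
  apply Ideal.subset_span
  rcases v with ⟨⟨p, q⟩, hpq⟩ | ⟨⟨p, q, r⟩, hpq, hqr⟩
  · have h1' : ¬ (p ∈ A ∧ q ∈ A) := fun hc => h1 hc
    have h2' : ¬ (p ∉ A ∧ q ∉ A) := fun hc => h2 hc
    by_cases hp : p ∈ A
    · exact ⟨p, q, hp, by tauto, Or.inl (svar_pq hpq).symm⟩
    · exact ⟨q, p, by tauto, hp, Or.inl (svar_qp hpq).symm⟩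
  · have h1' : ¬ (p ∈ A ∧ q ∈ A ∧ r ∈ A) := fun hc => h1 hc
    have h2' : ¬ (p ∉ A ∧ q ∉ A ∧ r ∉ A) := fun hc => h2 hc
    by_cases hp : p ∈ A <;> by_cases hr : r ∈ A
    · exact ⟨p, q, hp, by tauto, Or.inr ⟨r, (tvar_prq hpq hqr).symm⟩⟩
    · exact ⟨p, r, hp, hr, Or.inr ⟨q, (tvar_pqr hpq hqr).symm⟩⟩
    · exact ⟨r, p, hr, hp, Or.inr ⟨q, (tvar_rqp hpq hqr).symm⟩⟩
    · exact ⟨q, r, by tauto, hr, Or.inr ⟨p, (tvar_qpr hpq hqr).symm⟩⟩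

end ModelAux

/-- Coefficients of a vanishing combination over a linearly independent finite set vanish. -/
lemma sum_coeff_eq_zero {M : Type*} [AddCommGroup M] [Module ℝ M] {t : Set M}
    (hli : LinearIndependent ℝ ((↑) : t → M)) (tf : Finset M) (htf : (↑tf : Set M) = t)
    (c : M → ℝ) (h0 : ∑ u ∈ tf, c u • u = 0) : ∀ u ∈ tf, c u = 0 := by
  subst htf
  intro u hu
  have hsum : ∑ x ∈ tf.attach, c ↑x • (↑x : M) = 0 := by
    rw [Finset.sum_attach tf (fun u => c u • u)]; exact h0
  let emb : {x // x ∈ tf} ↪ ↥(↑tf : Set M) :=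
    ⟨fun x => ⟨↑x, Finset.mem_coe.mpr x.2⟩, by
      intro a b hab
      apply Subtype.ext
      exact Subtype.mk_eq_mk.mp hab⟩
  have hsum' : ∑ i ∈ tf.attach.map emb,
      (fun i : ↥(↑tf : Set M) => c ↑i) i • ((↑) : ↥(↑tf : Set M) → M) i = 0 := by
    rw [Finset.sum_map]; exact hsum
  have hall := linearIndependent_iff'.mp hli (tf.attach.map emb) (fun i => c ↑i) hsum'
  have humem : (⟨u, Finset.mem_coe.mpr hu⟩ : ↥(↑tf : Set M)) ∈ tf.attach.map emb := by
    rw [Finset.mem_map]; exact ⟨⟨u, hu⟩, Finset.mem_attach _ _, rfl⟩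
  exact hall _ humem

set_option maxHeartbeats 2000000 in
/-- If the DAG `G` is the disjoint union of the two induced subgraphs on
`A` and on `Aᶜ`, then `I^{≤3}(G) = I^{≤3}(G₁) + I^{≤3}(G₂) + ⟨s_{ij}, t_{ikj} : i ∈ V(G₁),
j ∈ V(G₂), k ∈ V⟩`, where the component ideals are taken in the variables indexed within
the respective component. -/
theorem disjoint_union_ideal (n : ℕ) (E : Fin n → Fin n → Prop)
    (hE : ∀ i j : Fin n, E i j → i < j)
    (A : Set (Fin n)) (hsplit : ∀ i j : Fin n, E i j → (i ∈ A ↔ j ∈ A)) :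
    momentIdeal E =
      Ideal.span {f : MvPolynomial (MomVar n) ℝ |
          f ∈ MvPolynomial.supported ℝ (varsIn A) ∧
          f ∈ momentIdeal (fun i j => E i j ∧ i ∈ A ∧ j ∈ A)} +
      Ideal.span {f : MvPolynomial (MomVar n) ℝ |
          f ∈ MvPolynomial.supported ℝ (varsIn Aᶜ) ∧
          f ∈ momentIdeal (fun i j => E i j ∧ i ∉ A ∧ j ∉ A)} +
      Ideal.span {f : MvPolynomial (MomVar n) ℝ |
          ∃ i j, i ∈ A ∧ j ∉ A ∧ (f = svar i j ∨ ∃ k, f = tvar i k j)} := by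
  classical
  have hsplitc : ∀ i j : Fin n, E i j → (i ∈ Aᶜ ↔ j ∈ Aᶜ) :=
    fun i j h => not_congr (hsplit i j h)
  set G1 : Set (MvPolynomial (MomVar n) ℝ) := {f | f ∈ MvPolynomial.supported ℝ (varsIn A) ∧
      f ∈ momentIdeal (fun i j => E i j ∧ i ∈ A ∧ j ∈ A)} with hG1
  set G2 : Set (MvPolynomial (MomVar n) ℝ) := {f | f ∈ MvPolynomial.supported ℝ (varsIn Aᶜ) ∧
      f ∈ momentIdeal (fun i j => E i j ∧ i ∉ A ∧ j ∉ A)} with hG2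
  set G3 : Set (MvPolynomial (MomVar n) ℝ) := {f | ∃ i j, i ∈ A ∧ j ∉ A ∧
      (f = svar i j ∨ ∃ k, f = tvar i k j)} with hG3
  have hJ1le : Ideal.span G1 ≤ momentIdeal E := by
    rw [Ideal.span_le]
    rintro f ⟨hfs, hfI⟩
    rw [SetLike.mem_coe, mem_momentIdeal_iff]
    intro S T hST
    obtain ⟨S', T', hmod, hag⟩ := model_restrict hE hsplit hST
    rw [eval_congr_of_supported hfs hag]
    exact mem_momentIdeal_iff.mp hfI S' T' hmod
  have hJ2le : Ideal.span G2 ≤ momentIdeal E := by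
    rw [Ideal.span_le]
    rintro f ⟨hfs, hfI⟩
    rw [SetLike.mem_coe, mem_momentIdeal_iff]
    intro S T hST
    obtain ⟨S', T', hmod, hag⟩ := model_restrict hE hsplitc hST
    rw [eval_congr_of_supported hfs hag]
    exact mem_momentIdeal_iff.mp hfI S' T' hmod
  have hJ3le : Ideal.span G3 ≤ momentIdeal E := by
    rw [Ideal.span_le]
    rintro f ⟨i, j, hi, hj, hf | ⟨k, hf⟩⟩ <;> subst hf
    · rw [SetLike.mem_coe, mem_momentIdeal_iff]
      intro S T hST
      exact eval_svar_zero (model_S_mixed hE hsplit hST).1 hi hj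
    · rw [SetLike.mem_coe, mem_momentIdeal_iff]
      intro S T hST
      exact eval_tvar_zero (model_S_mixed hE hsplit hST).2 hi hj k
  have hle1 : Ideal.span G1 ≤ Ideal.span G1 + Ideal.span G2 + Ideal.span G3 :=
    le_trans le_sup_left le_sup_left
  have hle2 : Ideal.span G2 ≤ Ideal.span G1 + Ideal.span G2 + Ideal.span G3 :=
    le_trans le_sup_right le_sup_left
  have hle3 : Ideal.span G3 ≤ Ideal.span G1 + Ideal.span G2 + Ideal.span G3 :=
    le_sup_right
  refine le_antisymm ?_ (sup_le (sup_le hJ1le hJ2le) hJ3le)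
  intro f hf
  set Dpure := f.support.filter
      (fun d => ∀ v ∈ d.support, v ∈ varsIn A ∨ v ∈ varsIn Aᶜ) with hDpure
  set mixsum : MvPolynomial (MomVar n) ℝ := ∑ d ∈ f.support.filter
      (fun d => ¬ ∀ v ∈ d.support, v ∈ varsIn A ∨ v ∈ varsIn Aᶜ),
      monomial d (coeff d f) with hmix
  set g : MvPolynomial (MomVar n) ℝ := ∑ d ∈ Dpure, monomial d (coeff d f) with hg
  have hfsum : f = g + mixsum := by
    rw [hg, hmix, hDpure]
    conv_lhs => rw [f.as_sum]
    exact (Finset.sum_filter_add_sum_filter_not f.support _ _).symm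
  have hmix3 : mixsum ∈ Ideal.span G3 := by
    rw [hmix]
    refine Submodule.sum_mem _ fun d hd => ?_
    have hd' := (Finset.mem_filter.mp hd).2
    push_neg at hd'
    obtain ⟨v, hv, hv1, hv2⟩ := hd'
    have hle : Finsupp.single v 1 ≤ d :=
      Finsupp.single_le_iff.mpr (Nat.one_le_iff_ne_zero.mpr (Finsupp.mem_support_iff.mp hv))
    have hmono : monomial d (coeff d f) =
        X v * monomial (d - Finsupp.single v 1) (coeff d f) := by
      rw [X, monomial_mul, one_mul, add_tsub_cancel_of_le hle]
    rw [hmono]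
    exact Ideal.mul_mem_right _ _ (mixed_var_mem v hv1 hv2)
  have hgI : g ∈ momentIdeal E := by
    have hgf : g = f - mixsum := by rw [hfsum]; exact (add_sub_cancel_right _ _).symm
    rw [hgf]
    exact Submodule.sub_mem _ hf (hJ3le hmix3)
  set dA : (MomVar n →₀ ℕ) → (MomVar n →₀ ℕ) :=
    (fun d => d.filter (fun v => v ∈ varsIn A)) with hdA
  set dB : (MomVar n →₀ ℕ) → (MomVar n →₀ ℕ) :=
    (fun d => d.filter (fun v => ¬ v ∈ varsIn A)) with hdB
  set mB : (MomVar n →₀ ℕ) → MvPolynomial (MomVar n) ℝ :=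
    (fun d => monomial (dB d) 1) with hmB
  have hsplitmono : ∀ d, monomial d (coeff d f) = monomial (dA d) (coeff d f) * mB d := by
    intro d
    simp only [hmB, hdB, hdA]
    rw [monomial_mul, mul_one, Finsupp.filter_pos_add_filter_neg]
  have hmBmem : ∀ d ∈ Dpure, mB d ∈ MvPolynomial.supported ℝ (varsIn Aᶜ) := by
    intro d hd
    have hdp := (Finset.mem_filter.mp hd).2
    rw [mem_supported]
    simp only [hmB, hdB]
    rw [vars_monomial (one_ne_zero (α := ℝ)), Finsupp.support_filter]
    intro v hv
    obtain ⟨hvd, hvA⟩ := Finset.mem_filter.mp (Finset.mem_coe.mp hv)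
    rcases hdp v hvd with h | h
    · exact absurd h hvA
    · exact h
  have hcAmem : ∀ d ∈ f.support,
      monomial (dA d) (coeff d f) ∈ MvPolynomial.supported ℝ (varsIn A) := by
    intro d hd
    have hc : coeff d f ≠ 0 := mem_support_iff.mp hd
    rw [mem_supported]
    simp only [hdA]
    rw [vars_monomial hc, Finsupp.support_filter]
    intro v hv
    exact (Finset.mem_filter.mp (Finset.mem_coe.mp hv)).2
  set VA : Submodule ℝ (MvPolynomial (MomVar n) ℝ) :=
    Subalgebra.toSubmodule (MvPolynomial.supported ℝ (varsIn A)) with hVA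
  set N : Submodule ℝ (MvPolynomial (MomVar n) ℝ) :=
    VA ⊓ (Submodule.restrictScalars ℝ
      (momentIdeal (fun i j => E i j ∧ i ∈ A ∧ j ∈ A))) with hN
  obtain ⟨q0, hq0⟩ := Submodule.exists_isCompl (N.comap VA.subtype)
  set C : Submodule ℝ (MvPolynomial (MomVar n) ℝ) := q0.map VA.subtype with hC
  have hNVA : N ≤ VA := inf_le_left
  have hmapcomap : (N.comap VA.subtype).map VA.subtype = N := by
    rw [Submodule.map_comap_subtype]
    exact inf_eq_right.mpr hNVA
  have hCVA : C ≤ VA := Submodule.map_subtype_le VA q0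
  have hsupCN : C ⊔ N = VA := by
    rw [hC]
    conv_lhs => rw [← hmapcomap]
    rw [← Submodule.map_sup, sup_comm q0 _, hq0.codisjoint.eq_top, Submodule.map_subtype_top]
  have hinfCN : C ⊓ N = ⊥ := by
    rw [hC]
    conv_lhs => rw [← hmapcomap]
    rw [← Submodule.map_inf _ (Submodule.injective_subtype VA), inf_comm q0 _,
      hq0.disjoint.eq_bot, Submodule.map_bot]
  have hdecomp : ∀ d ∈ Dpure, ∃ y z, y ∈ C ∧ z ∈ N ∧
      monomial (dA d) (coeff d f) = y + z := by
    intro d hd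
    have hmem : monomial (dA d) (coeff d f) ∈ C ⊔ N := by
      rw [hsupCN, hVA]
      exact (Subalgebra.mem_toSubmodule _).mpr (hcAmem d (Finset.mem_filter.mp hd).1)
    obtain ⟨y, hy, z, hz, hyz⟩ := Submodule.mem_sup.mp hmem
    exact ⟨y, z, hy, hz, hyz.symm⟩
  choose! y z hyC hzN hyz using hdecomp
  have hgsplit : g = (∑ d ∈ Dpure, y d * mB d) + ∑ d ∈ Dpure, z d * mB d := by
    rw [hg, ← Finset.sum_add_distrib]
    refine Finset.sum_congr rfl fun d hd => ?_
    rw [hsplitmono d, hyz d hd, add_mul]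
  have hJ1part : (∑ d ∈ Dpure, z d * mB d) ∈ Ideal.span G1 := by
    refine Submodule.sum_mem _ fun d hd => ?_
    refine Ideal.mul_mem_right _ _ (Ideal.subset_span ?_)
    have hzd := hzN d hd
    rw [hN, Submodule.mem_inf] at hzd
    exact ⟨(Subalgebra.mem_toSubmodule _).mp hzd.1,
      (Submodule.restrictScalars_mem _ _ _).mp hzd.2⟩
  set g' : MvPolynomial (MomVar n) ℝ := ∑ d ∈ Dpure, y d * mB d with hg'
  have hg'I : g' ∈ momentIdeal E := by
    have hgg : g' = g - ∑ d ∈ Dpure, z d * mB d := by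
      rw [hgsplit, hg']
      exact (add_sub_cancel_right _ _).symm
    rw [hgg]
    exact Submodule.sub_mem _ hgI (hJ1le hJ1part)
  obtain ⟨t, hts, hspan, hli⟩ := exists_linearIndependent ℝ ((fun d => y d) '' ↑Dpure)
  have htC : t ⊆ ↑C := by
    refine hts.trans ?_
    rintro x ⟨d, hd, rfl⟩
    exact hyC d (Finset.mem_coe.mp hd)
  have htfin : t.Finite :=
    Set.Finite.subset (Dpure.finite_toSet.image _) hts
  set tf : Finset (MvPolynomial (MomVar n) ℝ) := htfin.toFinset with htf
  have htf_coe : (↑tf : Set (MvPolynomial (MomVar n) ℝ)) = t := htfin.coe_toFinset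
  have hyspan : ∀ d ∈ Dpure, y d ∈ Submodule.span ℝ (↑tf : Set (MvPolynomial (MomVar n) ℝ)) := by
    intro d hd
    rw [htf_coe, hspan]
    exact Submodule.subset_span ⟨d, Finset.mem_coe.mpr hd, rfl⟩
  have hcoef : ∀ d ∈ Dpure, ∃ α : MvPolynomial (MomVar n) ℝ → ℝ,
      ∑ u ∈ tf, α u • u = y d :=
    fun d hd => (Submodule.mem_span_finset.mp (hyspan d hd)).imp fun _ h => h.2
  choose! α hα using hcoef
  set h : MvPolynomial (MomVar n) ℝ → MvPolynomial (MomVar n) ℝ :=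
    fun u => ∑ d ∈ Dpure, α d u • mB d with hh
  have hg'eq : g' = ∑ u ∈ tf, u * h u := by
    rw [hg']
    calc ∑ d ∈ Dpure, y d * mB d
        = ∑ d ∈ Dpure, ∑ u ∈ tf, α d u • (u * mB d) := by
          refine Finset.sum_congr rfl fun d hd => ?_
          rw [← hα d hd, Finset.sum_mul]
          exact Finset.sum_congr rfl fun u _ => smul_mul_assoc _ _ _
      _ = ∑ u ∈ tf, ∑ d ∈ Dpure, α d u • (u * mB d) := Finset.sum_comm
      _ = ∑ u ∈ tf, u * h u := by
          refine Finset.sum_congr rfl fun u _ => ?_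
          simp only [hh]
          rw [Finset.mul_sum]
          exact Finset.sum_congr rfl fun d _ => (mul_smul_comm _ _ _).symm
  have hkey : ∀ S2 T2, MomentModel (fun i j => E i j ∧ i ∉ A ∧ j ∉ A) S2 T2 →
      ∀ u ∈ tf, eval (evalVar S2 T2) (h u) = 0 := by
    intro S2 T2 h2
    set c : MvPolynomial (MomVar n) ℝ → ℝ := fun u => eval (evalVar S2 T2) (h u) with hcdef
    set w : MvPolynomial (MomVar n) ℝ := ∑ u ∈ tf, c u • u with hw
    have hcval : ∀ u, c u = ∑ d ∈ Dpure, α d u * eval (evalVar S2 T2) (mB d) := by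
      intro u
      simp only [hcdef, hh]
      rw [map_sum]
      refine Finset.sum_congr rfl fun d _ => ?_
      rw [smul_eq_C_mul, _root_.map_mul, eval_C]
    have hwI1 : w ∈ momentIdeal (fun i j => E i j ∧ i ∈ A ∧ j ∈ A) := by
      rw [mem_momentIdeal_iff]
      intro S1 T1 h1
      obtain ⟨S, T, hST, hagA, hagB⟩ := model_blend hE hsplit h1 h2
      have hevalmB : ∀ d ∈ Dpure, eval (evalVar S T) (mB d) = eval (evalVar S2 T2) (mB d) :=
        fun d hd => eval_congr_of_supported (hmBmem d hd) hagB
      have hevaly : ∀ d ∈ Dpure, eval (evalVar S T) (y d) = eval (evalVar S1 T1) (y d) := by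
        intro d hd
        have hyVA : y d ∈ MvPolynomial.supported ℝ (varsIn A) :=
          (Subalgebra.mem_toSubmodule _).mp (hCVA (hyC d hd))
        exact eval_congr_of_supported hyVA hagA
      have hzero : eval (evalVar S T) g' = 0 := mem_momentIdeal_iff.mp hg'I S T hST
      have hexp : eval (evalVar S T) g' =
          ∑ d ∈ Dpure, eval (evalVar S1 T1) (y d) * eval (evalVar S2 T2) (mB d) := by
        rw [hg', map_sum]
        refine Finset.sum_congr rfl fun d hd => ?_
        rw [_root_.map_mul, hevaly d hd, hevalmB d hd]
      have hwexp : eval (evalVar S1 T1) w = ∑ u ∈ tf, c u * eval (evalVar S1 T1) u := by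
        rw [hw, map_sum]
        refine Finset.sum_congr rfl fun u _ => ?_
        rw [smul_eq_C_mul, _root_.map_mul, eval_C]
      rw [hwexp]
      calc ∑ u ∈ tf, c u * eval (evalVar S1 T1) u
          = ∑ u ∈ tf, ∑ d ∈ Dpure,
              α d u * eval (evalVar S2 T2) (mB d) * eval (evalVar S1 T1) u := by
            refine Finset.sum_congr rfl fun u _ => ?_
            rw [hcval u, Finset.sum_mul]
        _ = ∑ d ∈ Dpure, ∑ u ∈ tf,
              α d u * eval (evalVar S2 T2) (mB d) * eval (evalVar S1 T1) u :=
            Finset.sum_comm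
        _ = ∑ d ∈ Dpure, eval (evalVar S1 T1) (y d) * eval (evalVar S2 T2) (mB d) := by
            refine Finset.sum_congr rfl fun d hd => ?_
            conv_rhs => rw [← hα d hd]
            rw [map_sum, Finset.sum_mul]
            refine Finset.sum_congr rfl fun u _ => ?_
            rw [smul_eq_C_mul, _root_.map_mul, eval_C]
            ring
        _ = 0 := by rw [← hexp, hzero]
    have hwC : w ∈ C := by
      rw [hw]
      exact Submodule.sum_mem _ fun u hu =>
        Submodule.smul_mem _ _ (htC (htf_coe ▸ Finset.mem_coe.mpr hu))
    have hwN : w ∈ N := by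
      rw [hN, Submodule.mem_inf]
      exact ⟨hCVA hwC, (Submodule.restrictScalars_mem _ _ _).mpr hwI1⟩
    have hw0 : w = 0 := by
      have hmem : w ∈ C ⊓ N := Submodule.mem_inf.mpr ⟨hwC, hwN⟩
      rw [hinfCN] at hmem
      simpa using hmem
    have hcz : ∀ u ∈ tf, c u = 0 := by
      refine sum_coeff_eq_zero hli tf htf_coe c ?_
      rw [← hw]
      exact hw0
    exact hcz
  have hhsupp : ∀ u, h u ∈ MvPolynomial.supported ℝ (varsIn Aᶜ) := by
    intro u
    simp only [hh]
    exact sum_mem fun d hd => Subalgebra.smul_mem _ (hmBmem d hd) _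
  have hg'J2 : g' ∈ Ideal.span G2 := by
    rw [hg'eq]
    refine Submodule.sum_mem _ fun u hu => ?_
    refine Ideal.mul_mem_left _ _ (Ideal.subset_span ?_)
    exact ⟨hhsupp u, mem_momentIdeal_iff.mpr fun S2 T2 h2 => hkey S2 T2 h2 u hu⟩
  have hfinal : f = g' + ((∑ d ∈ Dpure, z d * mB d) + mixsum) := by
    conv_lhs => rw [hfsum]
    rw [hgsplit, hg', add_assoc]
  rw [hfinal]
  exact Submodule.add_mem _ (hle2 hg'J2)
    (Submodule.add_mem _ (hle1 hJ1part) (hle3 hmix3))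


end LNG
end

section
/- Let G be a polytree (a DAG whose underlying undirected graph is a tree). Then for any k≥1 and any vertices i₁,…,i_k of G, there exists at most one simple k-trek between i₁,…,i_k; in particular the top vertex top(i₁,…,i_k) is well defined whenever a k-trek between i₁,…,i_k exists. -/
open MvPolynomial Matrix Finset

namespace LNG

variable {n : ℕ}

section Aux

variable {E : Fin n → Fin n → Prop}

lemma isDiPath_chain' : ∀ {p : List (Fin n)}, IsDiPath E p → List.Chain' E p
  | [], h => h.elim
  | [_], _ => List.isChain_singleton _
  | _ :: _ :: _, h => List.isChain_cons_cons.mpr ⟨h.1, isDiPath_chain' h.2⟩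

lemma isDiPath_chain'_lt (hlt : ∀ a b : Fin n, E a b → a < b) {p : List (Fin n)}
    (h : IsDiPath E p) : List.Chain' (· < ·) p :=
  (isDiPath_chain' h).imp fun a b hab => hlt a b hab

lemma nodup_of_isDiPath (hlt : ∀ a b : Fin n, E a b → a < b) {p : List (Fin n)}
    (h : IsDiPath E p) : p.Nodup :=
  ((List.isChain_iff_pairwise.mp (isDiPath_chain'_lt hlt h)).imp fun hab => ne_of_lt hab)

lemma le_getLast_of_chain' : ∀ {l : List (Fin n)} {m : Fin n},
    List.Chain' (· < ·) l → l.getLast? = some m → ∀ x ∈ l, x ≤ m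
  | [], _, _, h2, _, hx => by simp at hx
  | [a], m, _, h2, x, hx => by
      simp at h2 hx; subst h2; subst hx; exact le_refl _
  | a :: b :: l, m, hc, h2, x, hx => by
      have hc' := List.isChain_cons_cons.mp hc
      have h2' : (b :: l).getLast? = some m := by simpa using h2
      rcases List.mem_cons.mp hx with rfl | hx'
      · exact le_of_lt (lt_of_lt_of_le hc'.1
          (le_getLast_of_chain' hc'.2 h2' b List.mem_cons_self))
      · exact le_getLast_of_chain' hc'.2 h2' x hx'

lemma exists_walk (hlt : ∀ a b : Fin n, E a b → a < b) :
    ∀ (p : List (Fin n)) (v i : Fin n), IsPathFromTo E v p i →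
      ∃ w : (underlying E).Walk v i, w.support = p
  | [], _, _, h => absurd h.1 id
  | [a], v, i, h => by
      obtain ⟨-, h2, h3⟩ := h
      have hv : v = a := by simpa using h2.symm
      have hi : i = a := by simpa using h3.symm
      subst hv; subst hi
      exact ⟨.nil, rfl⟩
  | a :: b :: l, v, i, h => by
      obtain ⟨⟨hab, hd⟩, h2, h3⟩ := h
      have hv : v = a := by simpa using h2.symm
      subst hv
      obtain ⟨w, hw⟩ := exists_walk hlt (b :: l) b i ⟨hd, rfl, by simpa using h3⟩
      have hadj : (underlying E).Adj v b := show v ≠ b ∧ (E v b ∨ E b v) from ⟨(hlt _ _ hab).ne, Or.inl hab⟩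
      exact ⟨.cons hadj w, by simp [hw]⟩

lemma dipath_unique (hG : IsPolytree E) {v i : Fin n} {p q : List (Fin n)}
    (hp : IsPathFromTo E v p i) (hq : IsPathFromTo E v q i) : p = q := by
  obtain ⟨w1, hw1⟩ := exists_walk hG.1 p v i hp
  obtain ⟨w2, hw2⟩ := exists_walk hG.1 q v i hq
  have h1 : w1.IsPath := by
    rw [SimpleGraph.Walk.isPath_def, hw1]; exact nodup_of_isDiPath hG.1 hp.1
  have h2 : w2.IsPath := by
    rw [SimpleGraph.Walk.isPath_def, hw2]; exact nodup_of_isDiPath hG.1 hq.1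
  have := hG.2.IsAcyclic.path_unique ⟨w1, h1⟩ ⟨w2, h2⟩
  rw [← hw1, ← hw2, Subtype.mk_eq_mk.mp this]

lemma isDiPath_prefix :
    ∀ (l : List (Fin n)) (m : Fin n) (t : List (Fin n)),
      IsDiPath E (l ++ m :: t) → IsDiPath E (l ++ [m])
  | [], _, _, _ => trivial
  | [a], m, t, h => ⟨h.1, trivial⟩
  | a :: b :: l, m, t, h => ⟨h.1, isDiPath_prefix (b :: l) m t h.2⟩

lemma pathFromTo_prefix {v i m : Fin n} {l t : List (Fin n)}
    (h : IsPathFromTo E v (l ++ m :: t) i) : IsPathFromTo E v (l ++ [m]) m := by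
  refine ⟨isDiPath_prefix l m t h.1, ?_, List.getLast?_concat⟩
  cases l with
  | nil => simpa using h.2.1
  | cons a l' => simpa using h.2.1

lemma exists_first_mem (q : List (Fin n)) :
    ∀ (p : List (Fin n)), (∃ x ∈ p, x ∈ q) →
      ∃ l m t, p = l ++ m :: t ∧ m ∈ q ∧ ∀ x ∈ l, x ∉ q
  | [], h => by simp at h
  | a :: p', h => by
      by_cases ha : a ∈ q
      · exact ⟨[], a, p', rfl, ha, by simp⟩
      · obtain ⟨x, hx, hxq⟩ := h
        have hx' : x ∈ p' := by
          rcases List.mem_cons.mp hx with rfl | hm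
          · exact absurd hxq ha
          · exact hm
        obtain ⟨l, m, t, rfl, hm, hl⟩ := exists_first_mem q p' ⟨x, hx', hxq⟩
        refine ⟨a :: l, m, t, rfl, hm, ?_⟩
        rintro y hy
        rcases List.mem_cons.mp hy with rfl | hy'
        · exact ha
        · exact hl y hy'

/-- Uniqueness of the apex of a "co-trek" (two directed paths from `v` and `v'`
meeting only at their common sink) in a polytree. -/
lemma cotrek_apex_unique (hG : IsPolytree E) {v v' m m' : Fin n}
    {a b a' b' : List (Fin n)}
    (ha : IsPathFromTo E v a m) (hb : IsPathFromTo E v' b m)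
    (hab : ∀ x, x ∈ a → x ∈ b → x = m)
    (ha' : IsPathFromTo E v a' m') (hb' : IsPathFromTo E v' b' m')
    (hab' : ∀ x, x ∈ a' → x ∈ b' → x = m') : m = m' := by
  have key : ∀ (v v' m : Fin n) (a b : List (Fin n)),
      IsPathFromTo E v a m → IsPathFromTo E v' b m →
      (∀ x, x ∈ a → x ∈ b → x = m) →
      ∃ (W : (underlying E).Walk v v'), W.IsPath ∧ W.support = a ++ b.reverse.tail ∧
        m ∈ W.support ∧ ∀ x ∈ W.support, x ≤ m := by
    intro v v' m a b ha hb hab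
    obtain ⟨wa, hwa⟩ := exists_walk hG.1 a v m ha
    obtain ⟨wb, hwb⟩ := exists_walk hG.1 b v' m hb
    refine ⟨wa.append wb.reverse, ?_, ?_, ?_, ?_⟩
    case refine_2 =>
      rw [SimpleGraph.Walk.support_append, SimpleGraph.Walk.support_reverse, hwa, hwb]
    all_goals
      have hsupp : (wa.append wb.reverse).support = a ++ b.reverse.tail := by
        rw [SimpleGraph.Walk.support_append, SimpleGraph.Walk.support_reverse, hwa, hwb]
    · -- IsPath
      rw [SimpleGraph.Walk.isPath_def, hsupp, List.nodup_append]
      have hbnodup : b.Nodup := nodup_of_isDiPath hG.1 hb.1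
      have hbrev : b.reverse = m :: b.reverse.tail := by
        have : b.reverse.head? = some m := by
          rw [List.head?_reverse]; exact hb.2.2
        exact (List.cons_head?_tail this).symm
      refine ⟨nodup_of_isDiPath hG.1 ha.1, ?_, ?_⟩
      · have : b.reverse.Nodup := List.nodup_reverse.mpr hbnodup
        exact this.sublist (List.tail_sublist _)
      · intro x hxa y hxt hxy
        subst hxy
        have hxb : x ∈ b := by
          have : x ∈ b.reverse := (List.tail_sublist _).mem hxt
          exact List.mem_reverse.mp this
        have hxm : x = m := hab x hxa hxb
        subst hxm
        have : b.reverse.Nodup := List.nodup_reverse.mpr hbnodup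
        rw [hbrev] at this
        exact (List.nodup_cons.mp this).1 hxt
    · -- m ∈ support
      rw [hsupp]
      exact List.mem_append_left _ (List.mem_of_getLast? ha.2.2)
    · -- all ≤ m
      intro x hx
      rw [hsupp] at hx
      rcases List.mem_append.mp hx with hxa | hxt
      · exact le_getLast_of_chain' (isDiPath_chain'_lt hG.1 ha.1) ha.2.2 x hxa
      · have hxb : x ∈ b := List.mem_reverse.mp ((List.tail_sublist _).mem hxt)
        exact le_getLast_of_chain' (isDiPath_chain'_lt hG.1 hb.1) hb.2.2 x hxb
  obtain ⟨W, hW, -, hmW, hle⟩ := key v v' m a b ha hb hab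
  obtain ⟨W', hW', -, hmW', hle'⟩ := key v v' m' a' b' ha' hb' hab'
  have hWW' : W = W' :=
    Subtype.mk_eq_mk.mp (hG.2.IsAcyclic.path_unique ⟨W, hW⟩ ⟨W', hW'⟩)
  subst hWW'
  exact le_antisymm (hle' m hmW) (hle m' hmW')

end Aux

/-- In a polytree there is at most one simple `k`-trek between any
given vertices `i₁, …, i_k` (`k ≥ 1`); in particular the top is well defined. -/
theorem unique_simple_trek (n : ℕ) (E : Fin n → Fin n → Prop) (hG : IsPolytree E)
    (k : ℕ) (hk : 1 ≤ k) (i : Fin k → Fin n) (v v' : Fin n)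
    (P P' : Fin k → List (Fin n))
    (h : IsSimpleTrek E v P i) (h' : IsSimpleTrek E v' P' i) :
    v = v' ∧ P = P' := by
  obtain ⟨hT, hS⟩ := h
  obtain ⟨hT', hS'⟩ := h'
  have key : ∀ r : Fin k, ∃ (m : Fin n) (aL bL : List (Fin n)),
      IsPathFromTo E v aL m ∧ IsPathFromTo E v' bL m ∧
      (∀ x, x ∈ aL → x ∈ bL → x = m) ∧ m ∈ P r ∧ m ∈ P' r := by
    intro r
    have hp := hT r
    have hq := hT' r
    have hir : i r ∈ P r := List.mem_of_getLast? hp.2.2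
    have hir' : i r ∈ P' r := List.mem_of_getLast? hq.2.2
    obtain ⟨l, m, t, hdec, hmq, hl⟩ := exists_first_mem (P' r) (P r) ⟨i r, hir, hir'⟩
    obtain ⟨s, t', hdec'⟩ := List.append_of_mem hmq
    refine ⟨m, l ++ [m], s ++ [m], pathFromTo_prefix (hdec ▸ hp),
      pathFromTo_prefix (hdec' ▸ hq), ?_, ?_, hmq⟩
    · intro x hxa hxb
      rcases List.mem_append.mp hxa with hxl | hxm
      · exfalso
        apply hl x hxl
        have : x ∈ s ++ m :: t' := by
          rcases List.mem_append.mp hxb with hxs | hxm'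
          · exact List.mem_append_left _ hxs
          · simp at hxm'; subst hxm'; exact List.mem_append_right _ List.mem_cons_self
        rw [hdec']; exact this
      · simpa using hxm
    · rw [hdec]
      exact List.mem_append_right _ List.mem_cons_self
  choose m aL bL haL hbL hdisj hmP hmP' using key
  have hmeq : ∀ r s : Fin k, m r = m s := fun r s =>
    cotrek_apex_unique hG (haL r) (hbL r) (hdisj r) (haL s) (hbL s) (hdisj s)
  set r0 : Fin k := ⟨0, hk⟩ with hr0
  have hm_v : m r0 = v := hS (m r0) (fun r => by rw [hmeq r0 r]; exact hmP r)
  have hm_v' : m r0 = v' := hS' (m r0) (fun r => by rw [hmeq r0 r]; exact hmP' r)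
  have hvv' : v = v' := hm_v ▸ hm_v'
  subst hvv'
  exact ⟨rfl, funext fun r => dipath_unique hG (hT r) (hT' r)⟩

end LNG
end
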